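/- arXiv:math-ph/0508044 — 4 statements merged into one kernel-verified Lean document; each statement's English description precedes it below -/
import Mathlib

section
/- There is a universal constant C > 0 with the following property. Let (Ω, Σ, P) be a probability space, let 𝔉₁, 𝔉₂ ⊆ Σ be sub-σ-algebras, and let φ ≥ 0 satisfy |P(A ∩ B) − P(A)P(B)| ≤ φ · P(B) for all A ∈ 𝔉₁ and B ∈ 𝔉₂. Let ξ be an 𝔉₁-measurable real random variable with (E|ξ|²)^{1/2} ≤ a and η an 𝔉₂-measurable real random variable with (E|η|²)^{1/2} ≤ b. Then |E(ξη) − E(ξ)E(η)| ≤ C · a · b · φ^{1/2}. -/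
open MeasureTheory
open scoped ENNReal

variable {Ω : Type} {mΩ : MeasurableSpace Ω} {P : Measure Ω}

variable {Ω : Type} {mΩ : MeasurableSpace Ω} {P : Measure Ω}

lemma integral_sq_norm_eq (u : Ω → ℝ) : (∫ ω, ‖u ω‖ ^ (2:ℝ) ∂P) = ∫ ω, u ω ^ 2 ∂P := by
  refine integral_congr_ae (Filter.Eventually.of_forall fun ω => ?_)
  simp only []
  rw [show ((2:ℝ)) = ((2:ℕ):ℝ) by norm_num, Real.rpow_natCast, Real.norm_eq_abs, sq_abs]

lemma sqrt_integral_sq_eq {u : Ω → ℝ} (hu : MemLp u 2 P) :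
    Real.sqrt (∫ ω, u ω ^ 2 ∂P) = (eLpNorm u 2 P).toReal := by
  rw [hu.eLpNorm_eq_integral_rpow_norm two_ne_zero ENNReal.ofNat_ne_top]
  rw [ENNReal.toReal_ofReal (by positivity)]
  have h2 : (2 : ℝ≥0∞).toReal = 2 := by simp
  rw [h2, integral_sq_norm_eq, Real.sqrt_eq_rpow]
  norm_num

lemma int_mul_integrable {u v : Ω → ℝ} (hu : MemLp u 2 P) (hv : MemLp v 2 P) :
    Integrable (fun ω => u ω * v ω) P := by
  have hb : ∀ ω, ‖u ω * v ω‖ ≤ (1/2) * (u ω ^ 2 + v ω ^ 2) := by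
    intro ω
    rw [norm_mul, Real.norm_eq_abs, Real.norm_eq_abs]
    nlinarith [sq_nonneg (|u ω| - |v ω|), abs_nonneg (u ω), abs_nonneg (v ω), sq_abs (u ω), sq_abs (v ω)]
  exact Integrable.mono' ((hu.integrable_sq.add hv.integrable_sq).const_mul (1/2))
    (hu.aestronglyMeasurable.mul hv.aestronglyMeasurable)
    (Filter.Eventually.of_forall hb)

lemma int_CS {u v : Ω → ℝ} (hu : MemLp u 2 P) (hv : MemLp v 2 P) :
    |∫ ω, u ω * v ω ∂P| ≤ Real.sqrt (∫ ω, u ω ^ 2 ∂P) * Real.sqrt (∫ ω, v ω ^ 2 ∂P) := by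
  have h1 : |∫ ω, u ω * v ω ∂P| ≤ ∫ ω, ‖u ω‖ * ‖v ω‖ ∂P := by
    have := norm_integral_le_integral_norm (μ := P) (f := fun ω => u ω * v ω)
    rw [Real.norm_eq_abs] at this
    refine this.trans_eq (integral_congr_ae (Filter.Eventually.of_forall fun ω => ?_))
    simp only [norm_mul]
  have hpq : Real.HolderConjugate 2 2 := by constructor <;> norm_num
  have h2' : ENNReal.ofReal (2:ℝ) = 2 := by
    rw [ENNReal.ofReal_ofNat]
  have h2 := integral_mul_norm_le_Lp_mul_Lq (μ := P) hpq (h2' ▸ hu) (h2' ▸ hv)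
  rw [integral_sq_norm_eq, integral_sq_norm_eq] at h2
  calc |∫ ω, u ω * v ω ∂P| ≤ ∫ ω, ‖u ω‖ * ‖v ω‖ ∂P := h1
    _ ≤ (∫ ω, u ω ^ 2 ∂P) ^ (1/2:ℝ) * (∫ ω, v ω ^ 2 ∂P) ^ (1/2:ℝ) := h2
    _ = _ := by rw [Real.sqrt_eq_rpow, Real.sqrt_eq_rpow]



lemma expand_one [IsFiniteMeasure P] {u : Ω → ℝ} (hu : Measurable[mΩ] u)
    (hur : (Set.range u).Finite) (F : ℝ → ℝ) :
    ∫ ω, F (u ω) ∂P = ∑ a ∈ hur.toFinset, F a * (P (u ⁻¹' {a})).toReal := by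
  have hpt : ∀ ω, F (u ω) = ∑ a ∈ hur.toFinset,
      Set.indicator (u ⁻¹' {a}) (fun _ => F a) ω := by
    intro ω
    rw [Finset.sum_eq_single_of_mem (u ω) (hur.mem_toFinset.mpr ⟨ω, rfl⟩)]
    · rw [Set.indicator_of_mem (by simp)]
    · intro b _ hb
      apply Set.indicator_of_notMem
      simp [Ne.symm hb]
  calc ∫ ω, F (u ω) ∂P
      = ∫ ω, ∑ a ∈ hur.toFinset, Set.indicator (u ⁻¹' {a}) (fun _ => F a) ω ∂P :=
        integral_congr_ae (Filter.Eventually.of_forall hpt)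
    _ = ∑ a ∈ hur.toFinset, ∫ ω, Set.indicator (u ⁻¹' {a}) (fun _ => F a) ω ∂P :=
        integral_finset_sum _ (fun a _ =>
          (integrable_const (F a)).indicator (hu (measurableSet_singleton a)))
    _ = _ := by
        refine Finset.sum_congr rfl fun a _ => ?_
        rw [integral_indicator_const (F a) (hu (measurableSet_singleton a)),
          smul_eq_mul, mul_comm, measureReal_def]

lemma expand_two [IsFiniteMeasure P] {u v : Ω → ℝ} (hu : Measurable[mΩ] u) (hv : Measurable[mΩ] v)
    (hur : (Set.range u).Finite) (hvr : (Set.range v).Finite) (F : ℝ → ℝ → ℝ) :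
    ∫ ω, F (u ω) (v ω) ∂P = ∑ p ∈ hur.toFinset ×ˢ hvr.toFinset,
      F p.1 p.2 * (P (u ⁻¹' {p.1} ∩ v ⁻¹' {p.2})).toReal := by
  have hpt : ∀ ω, F (u ω) (v ω) = ∑ p ∈ hur.toFinset ×ˢ hvr.toFinset,
      Set.indicator (u ⁻¹' {p.1} ∩ v ⁻¹' {p.2}) (fun _ => F p.1 p.2) ω := by
    intro ω
    rw [Finset.sum_eq_single_of_mem (u ω, v ω)
      (Finset.mem_product.mpr ⟨hur.mem_toFinset.mpr ⟨ω, rfl⟩, hvr.mem_toFinset.mpr ⟨ω, rfl⟩⟩)]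
    · rw [Set.indicator_of_mem (by simp)]
    · intro p _ hp
      apply Set.indicator_of_notMem
      intro hmem
      obtain ⟨h1, h2⟩ := hmem
      apply hp
      simp only [Set.mem_preimage, Set.mem_singleton_iff] at h1 h2
      exact Prod.ext_iff.mpr ⟨h1.symm, h2.symm⟩
  calc ∫ ω, F (u ω) (v ω) ∂P
      = ∫ ω, ∑ p ∈ hur.toFinset ×ˢ hvr.toFinset,
          Set.indicator (u ⁻¹' {p.1} ∩ v ⁻¹' {p.2}) (fun _ => F p.1 p.2) ω ∂P :=
        integral_congr_ae (Filter.Eventually.of_forall hpt)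
    _ = ∑ p ∈ hur.toFinset ×ˢ hvr.toFinset,
          ∫ ω, Set.indicator (u ⁻¹' {p.1} ∩ v ⁻¹' {p.2}) (fun _ => F p.1 p.2) ω ∂P :=
        integral_finset_sum _ (fun p _ =>
          (integrable_const _).indicator ((hu (measurableSet_singleton p.1)).inter
            (hv (measurableSet_singleton p.2))))
    _ = _ := by
        refine Finset.sum_congr rfl fun p _ => ?_
        rw [integral_indicator_const _ ((hu (measurableSet_singleton p.1)).inter
            (hv (measurableSet_singleton p.2))), smul_eq_mul, mul_comm, measureReal_def]

lemma sum_meas_toReal [IsFiniteMeasure P] {ι : Type} (s : Finset ι) (t : ι → Set Ω)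
    (hm : ∀ i ∈ s, MeasurableSet[mΩ] (t i)) (hd : (s : Set ι).PairwiseDisjoint t) :
    ∑ i ∈ s, (P (t i)).toReal = (P (⋃ i ∈ s, t i)).toReal := by
  rw [measure_biUnion_finset hd hm, ENNReal.toReal_sum (fun i _ => measure_ne_top P _)]

lemma fiber_disj (u : Ω → ℝ) (s : Finset ℝ) :
    (s : Set ℝ).PairwiseDisjoint (fun a => u ⁻¹' {a}) := by
  intro x _ y _ hxy
  refine Set.disjoint_left.mpr fun ω h h' => hxy ?_
  simp only [Set.mem_preimage, Set.mem_singleton_iff] at h h'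
  rw [← h, ← h']

theorem core_cov [IsProbabilityMeasure P]
    {𝔉₁ 𝔉₂ : MeasurableSpace Ω} (h1 : 𝔉₁ ≤ mΩ) (h2 : 𝔉₂ ≤ mΩ) {φ : ℝ} (hφ : 0 ≤ φ)
    (hmix : ∀ A B : Set Ω, MeasurableSet[𝔉₁] A → MeasurableSet[𝔉₂] B →
      |(P (A ∩ B)).toReal - (P A).toReal * (P B).toReal| ≤ φ * (P B).toReal)
    {f g : Ω → ℝ} (hf : Measurable[𝔉₁] f) (hg : Measurable[𝔉₂] g)
    (hfr : (Set.range f).Finite) (hgr : (Set.range g).Finite) :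
    |(∫ ω, f ω * g ω ∂P) - (∫ ω, f ω ∂P) * (∫ ω, g ω ∂P)| ≤
      2 * Real.sqrt φ * Real.sqrt (∫ ω, f ω ^ 2 ∂P) * Real.sqrt (∫ ω, g ω ^ 2 ∂P) := by
  have hfm : Measurable[mΩ] f := hf.mono h1 le_rfl
  have hgm : Measurable[mΩ] g := hg.mono h2 le_rfl
  set A := hfr.toFinset with hA
  set B := hgr.toFinset with hB
  set pa : ℝ → ℝ := fun a => (P (f ⁻¹' {a})).toReal with hpa
  set qb : ℝ → ℝ := fun b => (P (g ⁻¹' {b})).toReal with hqb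
  set pab : ℝ × ℝ → ℝ := fun p => (P (f ⁻¹' {p.1} ∩ g ⁻¹' {p.2})).toReal with hpab
  set c : ℝ × ℝ → ℝ := fun p => pab p - pa p.1 * qb p.2 with hc
  have pa_nonneg : ∀ a, 0 ≤ pa a := fun a => ENNReal.toReal_nonneg
  have qb_nonneg : ∀ b, 0 ≤ qb b := fun b => ENNReal.toReal_nonneg
  have pab_nonneg : ∀ p, 0 ≤ pab p := fun p => ENNReal.toReal_nonneg
  -- sum of qb over B is at most 1
  have key2 : ∑ b ∈ B, qb b ≤ 1 := by
    simp only [hqb]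
    rw [sum_meas_toReal B (fun b => g ⁻¹' {b})
      (fun b _ => hgm (measurableSet_singleton b)) (fiber_disj g B)]
    calc (P (⋃ b ∈ B, g ⁻¹' {b})).toReal ≤ (P Set.univ).toReal :=
          ENNReal.toReal_mono (measure_ne_top P _) (measure_mono (Set.subset_univ _))
      _ = 1 := by simp
  -- sum of pab over b ∈ B is at most pa a
  have key1 : ∀ a, ∑ b ∈ B, pab (a, b) ≤ pa a := by
    intro a
    simp only [hpab]
    rw [sum_meas_toReal B (fun b => f ⁻¹' {a} ∩ g ⁻¹' {b})
      (fun b _ => (hfm (measurableSet_singleton a)).inter (hgm (measurableSet_singleton b)))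
      (fun x hx y hy hxy => (fiber_disj g B hx hy hxy).mono
        Set.inter_subset_right Set.inter_subset_right)]
    exact ENNReal.toReal_mono (measure_ne_top P _)
      (measure_mono (Set.iUnion₂_subset fun b _ => Set.inter_subset_left))
  -- row bound (trivial)
  have key3 : ∀ a, ∑ b ∈ B, |c (a, b)| ≤ 2 * pa a := by
    intro a
    calc ∑ b ∈ B, |c (a, b)| ≤ ∑ b ∈ B, (pab (a, b) + pa a * qb b) := by
          refine Finset.sum_le_sum fun b _ => ?_
          simp only [hc]
          have h1' := pab_nonneg (a, b)
          have h2' := mul_nonneg (pa_nonneg a) (qb_nonneg b)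
          rw [abs_sub_le_iff]
          constructor <;> linarith
      _ = (∑ b ∈ B, pab (a, b)) + pa a * ∑ b ∈ B, qb b := by
          rw [Finset.sum_add_distrib, Finset.mul_sum]
      _ ≤ pa a + pa a * 1 := by
          refine add_le_add (key1 a) (mul_le_mul_of_nonneg_left key2 (pa_nonneg a))
      _ = 2 * pa a := by ring
  -- column bound (mixing, union trick)
  have union_bound : ∀ (b : ℝ) (S : Finset ℝ), |∑ a ∈ S, c (a, b)| ≤ φ * qb b := by
    intro b S
    have hU1 : MeasurableSet[𝔉₁] (⋃ a ∈ S, f ⁻¹' {a}) :=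
      MeasurableSet.biUnion S.countable_toSet (fun a _ => hf (measurableSet_singleton a))
    have e1 : ∑ a ∈ S, pab (a, b) = (P ((⋃ a ∈ S, f ⁻¹' {a}) ∩ g ⁻¹' {b})).toReal := by
      simp only [hpab]
      rw [sum_meas_toReal S (fun a => f ⁻¹' {a} ∩ g ⁻¹' {b})
        (fun a _ => (hfm (measurableSet_singleton a)).inter (hgm (measurableSet_singleton b)))
        (fun x hx y hy hxy => (fiber_disj f S hx hy hxy).mono
          Set.inter_subset_left Set.inter_subset_left)]
      rw [Set.iUnion₂_inter]
    have e2 : ∑ a ∈ S, pa a = (P (⋃ a ∈ S, f ⁻¹' {a})).toReal := by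
      simp only [hpa]
      exact sum_meas_toReal S (fun a => f ⁻¹' {a})
        (fun a _ => hfm (measurableSet_singleton a)) (fiber_disj f S)
    have : ∑ a ∈ S, c (a, b) = (P ((⋃ a ∈ S, f ⁻¹' {a}) ∩ g ⁻¹' {b})).toReal -
        (P (⋃ a ∈ S, f ⁻¹' {a})).toReal * qb b := by
      simp only [hc]
      rw [Finset.sum_sub_distrib, ← Finset.sum_mul, e1, e2]
    rw [this]
    exact hmix _ _ hU1 (hg (measurableSet_singleton b))
  have key4 : ∀ b, ∑ a ∈ A, |c (a, b)| ≤ 2 * (φ * qb b) := by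
    intro b
    have hsplit : ∑ a ∈ A, |c (a, b)| =
        (∑ a ∈ A.filter (fun a => 0 ≤ c (a, b)), c (a, b)) +
        (- ∑ a ∈ A.filter (fun a => ¬ 0 ≤ c (a, b)), c (a, b)) := by
      rw [← Finset.sum_filter_add_sum_filter_not A (fun a => 0 ≤ c (a, b))
        (fun a => |c (a, b)|), ← Finset.sum_neg_distrib]
      congr 1
      · exact Finset.sum_congr rfl fun a ha =>
          abs_of_nonneg (Finset.mem_filter.mp ha).2
      · exact Finset.sum_congr rfl fun a ha =>
          abs_of_neg (lt_of_not_ge (Finset.mem_filter.mp ha).2)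
    rw [hsplit]
    have b1 := (le_abs_self _).trans (union_bound b (A.filter (fun a => 0 ≤ c (a, b))))
    have b2 := (neg_le_abs _).trans (union_bound b (A.filter (fun a => ¬ 0 ≤ c (a, b))))
    linarith
  -- expansions
  have Efg : ∫ ω, f ω * g ω ∂P = ∑ p ∈ A ×ˢ B, p.1 * p.2 * pab p :=
    expand_two hfm hgm hfr hgr (fun x y => x * y)
  have Ef : ∫ ω, f ω ∂P = ∑ a ∈ A, a * pa a := expand_one hfm hfr (fun x => x)
  have Eg : ∫ ω, g ω ∂P = ∑ b ∈ B, b * qb b := expand_one hgm hgr (fun x => x)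
  have Ef2 : ∫ ω, f ω ^ 2 ∂P = ∑ a ∈ A, a ^ 2 * pa a := expand_one hfm hfr (fun x => x ^ 2)
  have Eg2 : ∫ ω, g ω ^ 2 ∂P = ∑ b ∈ B, b ^ 2 * qb b := expand_one hgm hgr (fun x => x ^ 2)
  have If_nonneg : (0:ℝ) ≤ ∫ ω, f ω ^ 2 ∂P := integral_nonneg fun ω => sq_nonneg _
  have Ig_nonneg : (0:ℝ) ≤ ∫ ω, g ω ^ 2 ∂P := integral_nonneg fun ω => sq_nonneg _
  have covEq : (∫ ω, f ω * g ω ∂P) - (∫ ω, f ω ∂P) * (∫ ω, g ω ∂P) =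
      ∑ p ∈ A ×ˢ B, p.1 * p.2 * c p := by
    rw [Efg, Ef, Eg, Finset.sum_mul_sum, ← Finset.sum_product', ← Finset.sum_sub_distrib]
    refine Finset.sum_congr rfl fun p _ => ?_
    simp only [hc]
    ring
  rw [covEq]
  -- Cauchy-Schwarz
  have CS := Real.sum_mul_le_sqrt_mul_sqrt (A ×ˢ B)
    (fun p => |p.1| * Real.sqrt |c p|) (fun p => |p.2| * Real.sqrt |c p|)
  have habs : |∑ p ∈ A ×ˢ B, p.1 * p.2 * c p| ≤
      ∑ p ∈ A ×ˢ B, (|p.1| * Real.sqrt |c p|) * (|p.2| * Real.sqrt |c p|) := by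
    refine (Finset.abs_sum_le_sum_abs _ _).trans (le_of_eq ?_)
    refine Finset.sum_congr rfl fun p _ => ?_
    rw [abs_mul, abs_mul]
    have h' : Real.sqrt |c p| * Real.sqrt |c p| = |c p| := Real.mul_self_sqrt (abs_nonneg _)
    linear_combination (-(|p.1| * |p.2|)) * h'
  have sqeq1 : ∑ p ∈ A ×ˢ B, (|p.1| * Real.sqrt |c p|) ^ 2 =
      ∑ p ∈ A ×ˢ B, p.1 ^ 2 * |c p| := by
    refine Finset.sum_congr rfl fun p _ => ?_
    rw [mul_pow, sq_abs, Real.sq_sqrt (abs_nonneg _)]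
  have sqeq2 : ∑ p ∈ A ×ˢ B, (|p.2| * Real.sqrt |c p|) ^ 2 =
      ∑ p ∈ A ×ˢ B, p.2 ^ 2 * |c p| := by
    refine Finset.sum_congr rfl fun p _ => ?_
    rw [mul_pow, sq_abs, Real.sq_sqrt (abs_nonneg _)]
  have S1 : ∑ p ∈ A ×ˢ B, p.1 ^ 2 * |c p| ≤ 2 * ∫ ω, f ω ^ 2 ∂P := by
    rw [Finset.sum_product, Ef2]
    calc ∑ a ∈ A, ∑ b ∈ B, (a:ℝ) ^ 2 * |c (a, b)|
        = ∑ a ∈ A, a ^ 2 * ∑ b ∈ B, |c (a, b)| := by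
          refine Finset.sum_congr rfl fun a _ => ?_; rw [Finset.mul_sum]
      _ ≤ ∑ a ∈ A, a ^ 2 * (2 * pa a) :=
          Finset.sum_le_sum fun a _ => mul_le_mul_of_nonneg_left (key3 a) (sq_nonneg a)
      _ = 2 * ∑ a ∈ A, a ^ 2 * pa a := by
          rw [Finset.mul_sum]; exact Finset.sum_congr rfl fun a _ => by ring
  have S2 : ∑ p ∈ A ×ˢ B, p.2 ^ 2 * |c p| ≤ 2 * (φ * ∫ ω, g ω ^ 2 ∂P) := by
    rw [Finset.sum_product, Eg2, Finset.sum_comm]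
    calc ∑ b ∈ B, ∑ a ∈ A, (b:ℝ) ^ 2 * |c (a, b)|
        = ∑ b ∈ B, b ^ 2 * ∑ a ∈ A, |c (a, b)| := by
          refine Finset.sum_congr rfl fun b _ => ?_; rw [Finset.mul_sum]
      _ ≤ ∑ b ∈ B, b ^ 2 * (2 * (φ * qb b)) :=
          Finset.sum_le_sum fun b _ => mul_le_mul_of_nonneg_left (key4 b) (sq_nonneg b)
      _ = 2 * (φ * ∑ b ∈ B, b ^ 2 * qb b) := by
          rw [Finset.mul_sum, Finset.mul_sum]
          exact Finset.sum_congr rfl fun b _ => by ring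
  have sum1_nonneg : (0:ℝ) ≤ ∑ p ∈ A ×ˢ B, p.1 ^ 2 * |c p| :=
    Finset.sum_nonneg fun p _ => mul_nonneg (sq_nonneg _) (abs_nonneg _)
  calc |∑ p ∈ A ×ˢ B, p.1 * p.2 * c p|
      ≤ ∑ p ∈ A ×ˢ B, (|p.1| * Real.sqrt |c p|) * (|p.2| * Real.sqrt |c p|) := habs
    _ ≤ Real.sqrt (∑ p ∈ A ×ˢ B, (|p.1| * Real.sqrt |c p|) ^ 2) *
        Real.sqrt (∑ p ∈ A ×ˢ B, (|p.2| * Real.sqrt |c p|) ^ 2) := CS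
    _ = Real.sqrt (∑ p ∈ A ×ˢ B, p.1 ^ 2 * |c p|) *
        Real.sqrt (∑ p ∈ A ×ˢ B, p.2 ^ 2 * |c p|) := by rw [sqeq1, sqeq2]
    _ ≤ Real.sqrt (2 * ∫ ω, f ω ^ 2 ∂P) * Real.sqrt (2 * (φ * ∫ ω, g ω ^ 2 ∂P)) := by
        exact mul_le_mul (Real.sqrt_le_sqrt S1) (Real.sqrt_le_sqrt S2)
          (Real.sqrt_nonneg _) (Real.sqrt_nonneg _)
    _ = 2 * Real.sqrt φ * Real.sqrt (∫ ω, f ω ^ 2 ∂P) * Real.sqrt (∫ ω, g ω ^ 2 ∂P) := by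
        rw [Real.sqrt_mul (by norm_num : (0:ℝ) ≤ 2), Real.sqrt_mul (by norm_num : (0:ℝ) ≤ 2),
          Real.sqrt_mul hφ]
        have h22 : Real.sqrt 2 * Real.sqrt 2 = 2 := Real.mul_self_sqrt (by norm_num)
        linear_combination (Real.sqrt φ * Real.sqrt (∫ ω, f ω ^ 2 ∂P) *
          Real.sqrt (∫ ω, g ω ^ 2 ∂P)) * h22

lemma cov_triv [IsProbabilityMeasure P] {u v : Ω → ℝ}
    (hu : MemLp u 2 P) (hv : MemLp v 2 P) :
    |(∫ ω, u ω * v ω ∂P) - (∫ ω, u ω ∂P) * (∫ ω, v ω ∂P)| ≤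
      2 * Real.sqrt (∫ ω, u ω ^ 2 ∂P) * Real.sqrt (∫ ω, v ω ^ 2 ∂P) := by
  have h1 := int_CS hu hv
  have mean_le : ∀ (w : Ω → ℝ), MemLp w 2 P → |∫ ω, w ω ∂P| ≤ Real.sqrt (∫ ω, w ω ^ 2 ∂P) := by
    intro w hw
    have := int_CS hw (memLp_const (1:ℝ))
    simpa using this
  have h2 := mean_le u hu
  have h3 := mean_le v hv
  have h4 : |(∫ ω, u ω ∂P) * (∫ ω, v ω ∂P)| ≤
      Real.sqrt (∫ ω, u ω ^ 2 ∂P) * Real.sqrt (∫ ω, v ω ^ 2 ∂P) := by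
    rw [abs_mul]
    exact mul_le_mul h2 h3 (abs_nonneg _) (Real.sqrt_nonneg _)
  calc |(∫ ω, u ω * v ω ∂P) - (∫ ω, u ω ∂P) * (∫ ω, v ω ∂P)|
      ≤ |∫ ω, u ω * v ω ∂P| + |(∫ ω, u ω ∂P) * (∫ ω, v ω ∂P)| := abs_sub _ _
    _ ≤ _ := by linarith

/-- Lemma `il` (i) of the paper (Ibragimov–Linnik, Lemma 17.2.3): there is a universal
constant `C > 0` such that for any probability space, sub-σ-algebras `𝔉₁, 𝔉₂` with uniform
mixing coefficient at most `φ`, and square-integrable `ξ, η` measurable w.r.t. `𝔉₁, 𝔉₂`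
with `(E|ξ|²)^{1/2} ≤ a`, `(E|η|²)^{1/2} ≤ b`, one has
`|E(ξη) - EξEη| ≤ C a b φ^{1/2}`. -/
theorem mixing_covariance_bound_L2 :
    ∃ C : ℝ, 0 < C ∧
      ∀ (Ω : Type) [mΩ : MeasurableSpace Ω] (P : Measure Ω),
        IsProbabilityMeasure P →
        ∀ (𝔉₁ 𝔉₂ : MeasurableSpace Ω), 𝔉₁ ≤ mΩ → 𝔉₂ ≤ mΩ →
        ∀ (φ : ℝ), 0 ≤ φ →
        (∀ A B : Set Ω, MeasurableSet[𝔉₁] A → MeasurableSet[𝔉₂] B →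
          |(P (A ∩ B)).toReal - (P A).toReal * (P B).toReal| ≤ φ * (P B).toReal) →
        ∀ (ξ η : Ω → ℝ) (a b : ℝ),
          Measurable[𝔉₁] ξ → Measurable[𝔉₂] η →
          MemLp ξ 2 P → MemLp η 2 P →
          Real.sqrt (∫ ω, ξ ω ^ 2 ∂P) ≤ a → Real.sqrt (∫ ω, η ω ^ 2 ∂P) ≤ b →
          |(∫ ω, ξ ω * η ω ∂P) - (∫ ω, ξ ω ∂P) * (∫ ω, η ω ∂P)| ≤
            C * a * b * Real.sqrt φ := by
  refine ⟨2, by norm_num, ?_⟩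
  intro Ω mΩ P hP 𝔉₁ 𝔉₂ h1 h2 φ hφ hmix ξ η a b hmξ hmη hℒξ hℒη ha hb
  have ha0 : 0 ≤ a := (Real.sqrt_nonneg _).trans ha
  have hb0 : 0 ≤ b := (Real.sqrt_nonneg _).trans hb
  -- approximation of an L² function measurable w.r.t. a sub-σ-algebra by simple functions
  have approx : ∀ (𝔉 : MeasurableSpace Ω) (h𝔉 : 𝔉 ≤ mΩ) (u : Ω → ℝ),
      Measurable[𝔉] u → MemLp u 2 P → ∀ ε : ℝ, 0 < ε →
      ∃ f : Ω → ℝ, Measurable[𝔉] f ∧ (Set.range f).Finite ∧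
        MemLp f 2 P ∧ MemLp (fun ω => u ω - f ω) 2 P ∧
        Real.sqrt (∫ ω, (u ω - f ω) ^ 2 ∂P) ≤ ε ∧
        Real.sqrt (∫ ω, f ω ^ 2 ∂P) ≤ Real.sqrt (∫ ω, u ω ^ 2 ∂P) + ε := by
    intro 𝔉 h𝔉 u hmu hu ε hε
    have hsm : StronglyMeasurable[𝔉] u := hmu.stronglyMeasurable
    have hutrim : MemLp u 2 (P.trim h𝔉) := by
      refine ⟨hsm.aestronglyMeasurable, ?_⟩
      rw [eLpNorm_trim h𝔉 hsm]
      exact hu.2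
    obtain ⟨fs, hfs, -⟩ := hutrim.exists_simpleFunc_eLpNorm_sub_lt (by simp)
      (by simp [hε] : ENNReal.ofReal ε ≠ 0)
    set f : Ω → ℝ := ⇑fs with hfdef
    have hfmeas : Measurable[𝔉] f := fs.measurable
    have hffin : (Set.range f).Finite := fs.finite_range
    have hsmd : StronglyMeasurable[𝔉] (fun ω => u ω - f ω) :=
      hsm.sub fs.stronglyMeasurable
    have hsub : eLpNorm (fun ω => u ω - f ω) 2 P < ENNReal.ofReal ε := by
      have := hfs
      rw [← eLpNorm_trim h𝔉 hsmd]
      exact this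
    have hdmem : MemLp (fun ω => u ω - f ω) 2 P :=
      ⟨(hsmd.mono h𝔉).aestronglyMeasurable, hsub.trans_le le_top⟩
    have hfmem : MemLp f 2 P := by
      have heq : f = fun ω => u ω - (u ω - f ω) := by funext ω; ring
      rw [heq]
      exact hu.sub hdmem
    have hNd : Real.sqrt (∫ ω, (u ω - f ω) ^ 2 ∂P) ≤ ε := by
      rw [sqrt_integral_sq_eq hdmem]
      calc (eLpNorm (fun ω => u ω - f ω) 2 P).toReal
          ≤ (ENNReal.ofReal ε).toReal := ENNReal.toReal_mono ENNReal.ofReal_ne_top hsub.le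
        _ = ε := ENNReal.toReal_ofReal hε.le
    have hNf : Real.sqrt (∫ ω, f ω ^ 2 ∂P) ≤ Real.sqrt (∫ ω, u ω ^ 2 ∂P) + ε := by
      rw [sqrt_integral_sq_eq hfmem, sqrt_integral_sq_eq hu]
      have htri : eLpNorm f 2 P ≤ eLpNorm u 2 P + eLpNorm (fun ω => u ω - f ω) 2 P := by
        have heq : f = (u - fun ω => u ω - f ω) := by funext ω; simp
        calc eLpNorm f 2 P = eLpNorm (u - fun ω => u ω - f ω) 2 P := by rw [← heq]
          _ ≤ _ := eLpNorm_sub_le hu.aestronglyMeasurable hdmem.aestronglyMeasurable one_le_two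
      calc (eLpNorm f 2 P).toReal
          ≤ (eLpNorm u 2 P + eLpNorm (fun ω => u ω - f ω) 2 P).toReal :=
            ENNReal.toReal_mono
              (ENNReal.add_ne_top.mpr ⟨hu.eLpNorm_ne_top, hdmem.eLpNorm_ne_top⟩) htri
        _ = (eLpNorm u 2 P).toReal + (eLpNorm (fun ω => u ω - f ω) 2 P).toReal :=
            ENNReal.toReal_add hu.eLpNorm_ne_top hdmem.eLpNorm_ne_top
        _ ≤ _ := by
            have h' := hNd
            rw [sqrt_integral_sq_eq hdmem] at h'
            linarith
    exact ⟨f, hfmeas, hffin, hfmem, hdmem, hNd, hNf⟩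
  have step : ∀ ε : ℝ, 0 < ε →
      |(∫ ω, ξ ω * η ω ∂P) - (∫ ω, ξ ω ∂P) * (∫ ω, η ω ∂P)| ≤
        2 * Real.sqrt φ * ((a + ε) * (b + ε)) + 2 * ε * b + 2 * (a + ε) * ε := by
    intro ε hε
    obtain ⟨f, hfmeas, hffin, hfmem, hdfmem, hNdf, hNf⟩ := approx 𝔉₁ h1 ξ hmξ hℒξ ε hε
    obtain ⟨g, hgmeas, hgfin, hgmem, hdgmem, hNdg, hNg⟩ := approx 𝔉₂ h2 η hmη hℒη ε hε
    have hNf' : Real.sqrt (∫ ω, f ω ^ 2 ∂P) ≤ a + ε := hNf.trans (by linarith)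
    have hNg' : Real.sqrt (∫ ω, g ω ^ 2 ∂P) ≤ b + ε := hNg.trans (by linarith)
    have core := core_cov h1 h2 hφ hmix hfmeas hgmeas hffin hgfin
    have t1 := cov_triv hdfmem hℒη
    have t2 := cov_triv hfmem hdgmem
    have iξη := int_mul_integrable hℒξ hℒη
    have ifη := int_mul_integrable hfmem hℒη
    have ifg := int_mul_integrable hfmem hgmem
    have e1 : ∫ ω, (ξ ω - f ω) * η ω ∂P = (∫ ω, ξ ω * η ω ∂P) - ∫ ω, f ω * η ω ∂P := by
      rw [← integral_sub iξη ifη]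
      exact integral_congr_ae (Filter.Eventually.of_forall fun ω => by ring)
    have e2 : ∫ ω, f ω * (η ω - g ω) ∂P = (∫ ω, f ω * η ω ∂P) - ∫ ω, f ω * g ω ∂P := by
      rw [← integral_sub ifη ifg]
      exact integral_congr_ae (Filter.Eventually.of_forall fun ω => by ring)
    have e3 : ∫ ω, (ξ ω - f ω) ∂P = (∫ ω, ξ ω ∂P) - ∫ ω, f ω ∂P :=
      integral_sub (hℒξ.integrable one_le_two) (hfmem.integrable one_le_two)
    have e4 : ∫ ω, (η ω - g ω) ∂P = (∫ ω, η ω ∂P) - ∫ ω, g ω ∂P :=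
      integral_sub (hℒη.integrable one_le_two) (hgmem.integrable one_le_two)
    rw [e1, e3] at t1
    rw [e2, e4] at t2
    have m1 : Real.sqrt (∫ ω, (ξ ω - f ω) ^ 2 ∂P) * Real.sqrt (∫ ω, η ω ^ 2 ∂P) ≤ ε * b :=
      mul_le_mul hNdf hb (Real.sqrt_nonneg _) hε.le
    have m2 : Real.sqrt (∫ ω, f ω ^ 2 ∂P) * Real.sqrt (∫ ω, (η ω - g ω) ^ 2 ∂P) ≤
        (a + ε) * ε := mul_le_mul hNf' hNdg (Real.sqrt_nonneg _) (by linarith)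
    have m3 : 2 * Real.sqrt φ * Real.sqrt (∫ ω, f ω ^ 2 ∂P) * Real.sqrt (∫ ω, g ω ^ 2 ∂P) ≤
        2 * Real.sqrt φ * ((a + ε) * (b + ε)) := by
      rw [mul_assoc (2 * Real.sqrt φ)]
      exact mul_le_mul_of_nonneg_left
        (mul_le_mul hNf' hNg' (Real.sqrt_nonneg _) (by linarith)) (by positivity)
    have dec : (∫ ω, ξ ω * η ω ∂P) - (∫ ω, ξ ω ∂P) * (∫ ω, η ω ∂P) =
        ((∫ ω, f ω * g ω ∂P) - (∫ ω, f ω ∂P) * (∫ ω, g ω ∂P)) +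
        ((((∫ ω, ξ ω * η ω ∂P) - ∫ ω, f ω * η ω ∂P) -
          ((∫ ω, ξ ω ∂P) - ∫ ω, f ω ∂P) * (∫ ω, η ω ∂P)) +
         (((∫ ω, f ω * η ω ∂P) - ∫ ω, f ω * g ω ∂P) -
          (∫ ω, f ω ∂P) * ((∫ ω, η ω ∂P) - ∫ ω, g ω ∂P))) := by ring
    calc |(∫ ω, ξ ω * η ω ∂P) - (∫ ω, ξ ω ∂P) * (∫ ω, η ω ∂P)|
        ≤ |(∫ ω, f ω * g ω ∂P) - (∫ ω, f ω ∂P) * (∫ ω, g ω ∂P)| +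
          (|(((∫ ω, ξ ω * η ω ∂P) - ∫ ω, f ω * η ω ∂P) -
            ((∫ ω, ξ ω ∂P) - ∫ ω, f ω ∂P) * (∫ ω, η ω ∂P))| +
           |(((∫ ω, f ω * η ω ∂P) - ∫ ω, f ω * g ω ∂P) -
            (∫ ω, f ω ∂P) * ((∫ ω, η ω ∂P) - ∫ ω, g ω ∂P))|) := by
          rw [dec]
          exact (abs_add_le _ _).trans (by gcongr; exact abs_add_le _ _)
      _ ≤ 2 * Real.sqrt φ * ((a + ε) * (b + ε)) + 2 * ε * b + 2 * (a + ε) * ε := by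
          linarith [core.trans m3, t1, t2]
  have hF : Filter.Tendsto
      (fun ε : ℝ => 2 * Real.sqrt φ * ((a + ε) * (b + ε)) + 2 * ε * b + 2 * (a + ε) * ε)
      (nhdsWithin 0 (Set.Ioi 0)) (nhds (2 * Real.sqrt φ * (a * b))) := by
    have hc : Continuous
        (fun ε : ℝ => 2 * Real.sqrt φ * ((a + ε) * (b + ε)) + 2 * ε * b + 2 * (a + ε) * ε) := by
      continuity
    have h0 := (hc.tendsto 0).mono_left (nhdsWithin_le_nhds : nhdsWithin (0:ℝ) (Set.Ioi 0) ≤ nhds 0)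
    have : 2 * Real.sqrt φ * ((a + 0) * (b + 0)) + 2 * 0 * b + 2 * (a + 0) * 0 =
        2 * Real.sqrt φ * (a * b) := by ring
    rwa [this] at h0
  have hlim : |(∫ ω, ξ ω * η ω ∂P) - (∫ ω, ξ ω ∂P) * (∫ ω, η ω ∂P)| ≤
      2 * Real.sqrt φ * (a * b) :=
    ge_of_tendsto hF (eventually_nhdsWithin_of_forall fun ε hε => step ε hε)
  calc |(∫ ω, ξ ω * η ω ∂P) - (∫ ω, ξ ω ∂P) * (∫ ω, η ω ∂P)|
      ≤ 2 * Real.sqrt φ * (a * b) := hlim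
    _ = 2 * a * b * Real.sqrt φ := by ring
end

section
/- There is a universal constant C > 0 with the following property. Let (Ω, Σ, P) be a probability space, let 𝔉₁, 𝔉₂ ⊆ Σ be sub-σ-algebras, and let φ ≥ 0 satisfy |P(A ∩ B) − P(A)P(B)| ≤ φ · P(B) for all A ∈ 𝔉₁ and B ∈ 𝔉₂. Let ξ be an 𝔉₁-measurable real random variable with |ξ| ≤ a almost surely and η an 𝔉₂-measurable real random variable with |η| ≤ b almost surely. Then |E(ξη) − E(ξ)E(η)| ≤ C · a · b · φ. -/
open MeasureTheory

-- staircase step: bound for a fixed n ≥ 1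
lemma core_step {Ω : Type} [mΩ : MeasurableSpace Ω] (P : Measure Ω) [IsProbabilityMeasure P]
    {f g : Ω → ℝ} {M K : ℝ} (hM : 0 < M)
    (hf : Measurable f) (hf0 : ∀ ω, 0 ≤ f ω) (hfM : ∀ ω, f ω ≤ M)
    (hg : Integrable g P)
    (hK : ∀ c : ℝ, |∫ ω in {ω | c < f ω}, g ω ∂P| ≤ K) (hK0 : 0 ≤ K)
    (n : ℕ) (hn : 1 ≤ n) :
    |∫ ω, f ω * g ω ∂P| ≤ K * M + (M / n) * ∫ ω, |g ω| ∂P := by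
  have hnR : (0:ℝ) < n := by exact_mod_cast hn
  have hMn : 0 < M / n := div_pos hM hnR
  set S : ℕ → Set Ω := fun k => {ω | ((k:ℝ)+1) * (M / n) < f ω} with hS
  have hSmeas' : ∀ k, MeasurableSet (S k) := fun k => hf measurableSet_Ioi
  set fn : Ω → ℝ := fun ω =>
    (M / n) * ∑ k ∈ Finset.range n, (S k).indicator (fun _ => (1:ℝ)) ω with hfn
  -- pointwise approximation
  have happrox : ∀ ω, |f ω - fn ω| ≤ M / n := by
    intro ω
    have hy0 : 0 ≤ f ω / (M / n) := div_nonneg (hf0 ω) hMn.le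
    set y : ℝ := f ω / (M / n) with hy
    have hyn : y ≤ n := by
      rw [hy, div_le_iff₀ hMn]
      calc f ω ≤ M := hfM ω
        _ = n * (M / n) := by field_simp
    set m : ℕ := ⌈y⌉₊ with hm
    have hsum : (∑ k ∈ Finset.range n, (S k).indicator (fun _ => (1:ℝ)) ω)
        = ((min n (m - 1) : ℕ) : ℝ) := by
      have hfilter : (Finset.range n).filter (fun k => ω ∈ S k)
          = Finset.range (min n (m - 1)) := by
        ext k
        simp only [Finset.mem_filter, Finset.mem_range, lt_min_iff]
        constructor
        · rintro ⟨hkn, hkS⟩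
          refine ⟨hkn, ?_⟩
          have : ((k:ℝ)+1) < y := by
            rw [hy, lt_div_iff₀ hMn]; exact hkS
          have hkm : k + 1 < m := by
            rw [hm]
            exact Nat.lt_ceil.mpr (by push_cast; linarith)
          omega
        · rintro ⟨hkn, hkm⟩
          refine ⟨hkn, ?_⟩
          have hkm' : k + 1 < m := by omega
          have : ((k:ℝ)+1) < y := by
            have := Nat.lt_ceil.mp hkm'
            push_cast at this
            linarith
          show ((k:ℝ)+1) * (M / n) < f ω
          rw [hy, lt_div_iff₀ hMn] at this
          exact this
      rw [Finset.sum_indicator_eq_sum_filter]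
      simp [hfilter]
    have hub : fn ω ≤ f ω := by
      have h1 : ((min n (m - 1) : ℕ) : ℝ) ≤ y := by
        have : ((m - 1 : ℕ) : ℝ) ≤ y := by
          rcases Nat.eq_zero_or_pos m with h0 | h0
          · simp [h0]; exact hy0
          · have : ((m - 1 : ℕ) : ℝ) = (m : ℝ) - 1 := by
              push_cast [Nat.cast_sub h0]; ring
            rw [this]
            have := Nat.ceil_lt_add_one hy0
            rw [← hm] at this
            linarith
        calc ((min n (m - 1) : ℕ) : ℝ) ≤ ((m - 1 : ℕ) : ℝ) := by
              exact_mod_cast Nat.cast_le.mpr (min_le_right _ _)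
          _ ≤ y := this
      calc fn ω = (M / n) * ((min n (m - 1) : ℕ) : ℝ) := by simp only [hfn]; rw [hsum]
        _ ≤ (M / n) * y := mul_le_mul_of_nonneg_left h1 hMn.le
        _ = f ω := by rw [hy]; field_simp
    have hlb : f ω - M / n ≤ fn ω := by
      have h1 : y - 1 ≤ ((min n (m - 1) : ℕ) : ℝ) := by
        have hA : y - 1 ≤ (n : ℝ) := by linarith
        have hB : y - 1 ≤ ((m - 1 : ℕ) : ℝ) := by
          have hym : y ≤ (m : ℝ) := Nat.le_ceil y
          rcases Nat.eq_zero_or_pos m with h0 | h0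
          · rw [h0] at hym; simp only [h0, Nat.zero_sub, Nat.cast_zero] at hym ⊢; linarith
          · have hc : ((m - 1 : ℕ) : ℝ) = (m : ℝ) - 1 := by
              push_cast [Nat.cast_sub h0]; ring
            rw [hc]; linarith
        rcases min_choice n (m - 1) with hmc | hmc <;> rw [hmc]
        · exact hA
        · exact hB
      have : (M / n) * (y - 1) ≤ (M / n) * ((min n (m - 1) : ℕ) : ℝ) :=
        mul_le_mul_of_nonneg_left h1 hMn.le
      calc f ω - M / n = (M / n) * (y - 1) := by rw [hy]; field_simp
        _ ≤ fn ω := by simp only [hfn]; rw [hsum]; exact this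
    rw [abs_sub_le_iff]
    constructor <;> linarith
  -- fn is measurable (ambient) and bounded
  have hfnmeas : Measurable fn := by
    apply Measurable.const_mul
    apply Finset.measurable_sum
    intro k _
    exact (measurable_const.indicator (hSmeas' k))
  have hn1 : (1:ℝ) ≤ (n:ℝ) := by exact_mod_cast hn
  have hMnM : M / n ≤ M := by
    rw [div_le_iff₀ hnR]; nlinarith
  have hfnbd : ∀ ω, |fn ω| ≤ 2 * M := by
    intro ω
    have h1 := abs_sub_le_iff.mp (happrox ω)
    have h2 := hf0 ω
    have h3 := hfM ω
    rw [abs_le]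
    constructor <;> linarith [h1.1, h1.2]
  -- integral of fn * g
  have hint_ind : ∀ k, Integrable (fun ω => (S k).indicator (fun _ => (1:ℝ)) ω * g ω) P := by
    intro k
    apply hg.bdd_mul (c := 1) (measurable_const.indicator (hSmeas' k)).aestronglyMeasurable
    exact Filter.Eventually.of_forall fun x => by
      rw [Real.norm_eq_abs]
      rcases Set.indicator_eq_zero_or_self (S k) (fun _ => (1:ℝ)) x with h | h <;> simp [h]
  have hfng : ∫ ω, fn ω * g ω ∂P
      = (M / n) * ∑ k ∈ Finset.range n, ∫ ω in S k, g ω ∂P := by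
    have : ∀ ω, fn ω * g ω
        = (M / n) * ∑ k ∈ Finset.range n, (S k).indicator (fun _ => (1:ℝ)) ω * g ω := by
      intro ω; simp only [hfn]; rw [mul_assoc, Finset.sum_mul]
    rw [integral_congr_ae (Filter.Eventually.of_forall this), integral_const_mul,
      integral_finset_sum _ (fun k _ => hint_ind k)]
    congr 1
    refine Finset.sum_congr rfl (fun k _ => ?_)
    have : ∀ ω, (S k).indicator (fun _ => (1:ℝ)) ω * g ω = (S k).indicator g ω := by
      intro ω
      by_cases h : ω ∈ S k <;> simp [Set.indicator_apply, h]
    rw [integral_congr_ae (Filter.Eventually.of_forall this), integral_indicator (hSmeas' k)]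
  have hfngbd : |∫ ω, fn ω * g ω ∂P| ≤ K * M := by
    rw [hfng, abs_mul, abs_of_pos hMn]
    calc (M / n) * |∑ k ∈ Finset.range n, ∫ ω in S k, g ω ∂P|
        ≤ (M / n) * ∑ k ∈ Finset.range n, |∫ ω in S k, g ω ∂P| := by
          exact mul_le_mul_of_nonneg_left (Finset.abs_sum_le_sum_abs _ _) hMn.le
      _ ≤ (M / n) * ∑ k ∈ Finset.range n, K := by
          refine mul_le_mul_of_nonneg_left ?_ hMn.le
          exact Finset.sum_le_sum (fun k _ => hK _)
      _ = K * M := by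
          rw [Finset.sum_const, Finset.card_range]
          field_simp
          ring
  -- f * g integrable, fn * g integrable
  have hfg_int : Integrable (fun ω => f ω * g ω) P :=
    hg.bdd_mul (c := M) hf.aestronglyMeasurable
      (Filter.Eventually.of_forall fun x => by rw [Real.norm_eq_abs, abs_of_nonneg (hf0 x)]; exact hfM x)
  have hfng_int : Integrable (fun ω => fn ω * g ω) P :=
    hg.bdd_mul (c := 2 * M) hfnmeas.aestronglyMeasurable
      (Filter.Eventually.of_forall fun x => by rw [Real.norm_eq_abs]; exact hfnbd x)
  have hptw : ∀ ω, |f ω * g ω - fn ω * g ω| ≤ M / ↑n * |g ω| := by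
    intro ω
    have e : f ω * g ω - fn ω * g ω = (f ω - fn ω) * g ω := by ring
    rw [e, abs_mul]
    exact mul_le_mul_of_nonneg_right (happrox ω) (abs_nonneg _)
  have hdiff : |∫ ω, f ω * g ω ∂P - ∫ ω, fn ω * g ω ∂P| ≤ (M / n) * ∫ ω, |g ω| ∂P := by
    rw [← integral_sub hfg_int hfng_int]
    have h1 : |∫ ω, (f ω * g ω - fn ω * g ω) ∂P| ≤ ∫ ω, |f ω * g ω - fn ω * g ω| ∂P := by
      simpa [Real.norm_eq_abs] using
        norm_integral_le_integral_norm (fun ω => f ω * g ω - fn ω * g ω) (μ := P)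
    refine h1.trans ?_
    rw [← integral_const_mul]
    exact integral_mono_of_nonneg (Filter.Eventually.of_forall (fun ω => abs_nonneg _))
      (hg.abs.const_mul _) (Filter.Eventually.of_forall hptw)
  have htri : |∫ ω, f ω * g ω ∂P|
      ≤ |∫ ω, f ω * g ω ∂P - ∫ ω, fn ω * g ω ∂P| + |∫ ω, fn ω * g ω ∂P| := by
    have := abs_add_le (∫ ω, f ω * g ω ∂P - ∫ ω, fn ω * g ω ∂P) (∫ ω, fn ω * g ω ∂P)
    simpa using this
  linarith

lemma core0 {Ω : Type} [mΩ : MeasurableSpace Ω] (P : Measure Ω) [IsProbabilityMeasure P]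
    {f g : Ω → ℝ} {M K : ℝ}
    (hf : Measurable f) (hf0 : ∀ ω, 0 ≤ f ω) (hfM : ∀ ω, f ω ≤ M)
    (hg : Integrable g P)
    (hK : ∀ c : ℝ, |∫ ω in {ω | c < f ω}, g ω ∂P| ≤ K) (hK0 : 0 ≤ K) :
    |∫ ω, f ω * g ω ∂P| ≤ K * M := by
  have hΩ : Nonempty Ω := by
    by_contra h
    rw [not_nonempty_iff] at h
    have h1 : (P Set.univ) = 1 := measure_univ
    rw [Set.univ_eq_empty_iff.mpr h] at h1
    simp at h1
  have hM0 : 0 ≤ M := le_trans (hf0 hΩ.some) (hfM hΩ.some)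
  rcases hM0.lt_or_eq with hM | hM
  · have hlim : Filter.Tendsto (fun nn : ℕ => K * M + (M / nn) * ∫ ω, |g ω| ∂P)
        Filter.atTop (nhds (K * M)) := by
      have h0 : Filter.Tendsto (fun nn : ℕ => (M / nn) * ∫ ω, |g ω| ∂P)
          Filter.atTop (nhds 0) := by
        simpa using (tendsto_const_div_atTop_nhds_zero_nat M).mul_const (∫ ω, |g ω| ∂P)
      simpa using (tendsto_const_nhds (x := K * M)).add h0
    refine ge_of_tendsto hlim ?_
    filter_upwards [Filter.eventually_ge_atTop 1] with n hn
    exact core_step P hM hf hf0 hfM hg hK hK0 n hn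
  · have hf00 : ∀ ω, f ω * g ω = 0 := by
      intro ω
      have : f ω = 0 := le_antisymm (by rw [hM]; exact hfM ω) (hf0 ω)
      rw [this, zero_mul]
    rw [integral_congr_ae (Filter.Eventually.of_forall hf00)]
    simp [← hM]

lemma core1 {Ω : Type} [mΩ : MeasurableSpace Ω] (P : Measure Ω) [IsProbabilityMeasure P]
    {𝔪 : MeasurableSpace Ω} (h𝔪 : 𝔪 ≤ mΩ)
    {f g : Ω → ℝ} {M K : ℝ} (hM : 0 ≤ M)
    (hf : Measurable[𝔪] f) (hfM : ∀ᵐ ω ∂P, |f ω| ≤ M)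
    (hg : Integrable g P)
    (hK : ∀ S : Set Ω, MeasurableSet[𝔪] S → |∫ ω in S, g ω ∂P| ≤ K) :
    |∫ ω, f ω * g ω ∂P| ≤ 2 * (K * M) := by
  have hK0 : 0 ≤ K := by
    have := hK ∅ (@MeasurableSet.empty _ 𝔪)
    simpa using this
  set fp : Ω → ℝ := fun ω => min (max (f ω) 0) M with hfp
  set fm : Ω → ℝ := fun ω => min (max (-f ω) 0) M with hfm
  have hfp𝔪 : Measurable[𝔪] fp := (hf.max measurable_const).min measurable_const
  have hfm𝔪 : Measurable[𝔪] fm := (hf.neg.max measurable_const).min measurable_const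
  have hfpA : Measurable[mΩ] fp := hfp𝔪.mono h𝔪 le_rfl
  have hfmA : Measurable[mΩ] fm := hfm𝔪.mono h𝔪 le_rfl
  have hfp0 : ∀ ω, 0 ≤ fp ω := fun ω => le_min (le_max_right _ _) hM
  have hfm0 : ∀ ω, 0 ≤ fm ω := fun ω => le_min (le_max_right _ _) hM
  have hfpM : ∀ ω, fp ω ≤ M := fun ω => min_le_right _ _
  have hfmM : ∀ ω, fm ω ≤ M := fun ω => min_le_right _ _
  have hKp : ∀ c : ℝ, |∫ ω in {ω | c < fp ω}, g ω ∂P| ≤ K :=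
    fun c => hK _ (hfp𝔪 measurableSet_Ioi)
  have hKm : ∀ c : ℝ, |∫ ω in {ω | c < fm ω}, g ω ∂P| ≤ K :=
    fun c => hK _ (hfm𝔪 measurableSet_Ioi)
  have hp := core0 (mΩ := mΩ) P hfpA hfp0 hfpM hg hKp hK0
  have hm := core0 (mΩ := mΩ) P hfmA hfm0 hfmM hg hKm hK0
  have hae : (fun ω => f ω * g ω) =ᵐ[P] (fun ω => fp ω * g ω - fm ω * g ω) := by
    filter_upwards [hfM] with ω hω
    have h1 : fp ω - fm ω = f ω := by
      rcases le_total (f ω) 0 with h | h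
      · have e1 : max (f ω) 0 = 0 := max_eq_right h
        have e2 : max (-f ω) 0 = -f ω := max_eq_left (neg_nonneg.mpr h)
        have e3 : -f ω ≤ M := by
          have := abs_le.mp hω
          linarith [this.1]
        simp only [hfp, hfm, e1, e2, min_eq_left hM, min_eq_left e3]
        ring
      · have e1 : max (f ω) 0 = f ω := max_eq_left h
        have e2 : max (-f ω) 0 = 0 := max_eq_right (neg_nonpos.mpr h)
        have e3 : f ω ≤ M := by
          have := abs_le.mp hω
          linarith [this.2]
        simp only [hfp, hfm, e1, e2, min_eq_left hM, min_eq_left e3]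
        ring
    have : fp ω * g ω - fm ω * g ω = (fp ω - fm ω) * g ω := by ring
    rw [this, h1]
  have hint_p : Integrable (fun ω => fp ω * g ω) P :=
    hg.bdd_mul (c := M) hfpA.aestronglyMeasurable
      (Filter.Eventually.of_forall fun x => by rw [Real.norm_eq_abs, abs_of_nonneg (hfp0 x)]; exact hfpM x)
  have hint_m : Integrable (fun ω => fm ω * g ω) P :=
    hg.bdd_mul (c := M) hfmA.aestronglyMeasurable
      (Filter.Eventually.of_forall fun x => by rw [Real.norm_eq_abs, abs_of_nonneg (hfm0 x)]; exact hfmM x)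
  rw [integral_congr_ae hae, integral_sub hint_p hint_m]
  calc |(∫ ω, fp ω * g ω ∂P) - ∫ ω, fm ω * g ω ∂P|
      ≤ |∫ ω, fp ω * g ω ∂P| + |∫ ω, fm ω * g ω ∂P| := abs_sub _ _
    _ ≤ K * M + K * M := add_le_add hp hm
    _ = 2 * (K * M) := by ring

lemma stepA_aux {Ω : Type} [mΩ : MeasurableSpace Ω] (P : Measure Ω) [IsProbabilityMeasure P]
    {𝔪 : MeasurableSpace Ω} (h𝔪 : 𝔪 ≤ mΩ) {ξ : Ω → ℝ} {a φ : ℝ}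
    (hφ : 0 ≤ φ) (ha : 0 ≤ a) (hξ : Measurable[𝔪] ξ) (hξa : ∀ᵐ ω ∂P, |ξ ω| ≤ a)
    (hξi : Integrable ξ P)
    {B : Set Ω} (hBm : MeasurableSet[mΩ] B)
    (hmixB : ∀ S : Set Ω, MeasurableSet[𝔪] S →
      |(P (S ∩ B)).toReal - (P S).toReal * (P B).toReal| ≤ φ * (P B).toReal) :
    |∫ ω in B, (ξ ω - ∫ x, ξ x ∂P) ∂P| ≤ 2 * (φ * a) := by
  letI : MeasurableSpace Ω := mΩ
  set c : ℝ := (P B).toReal with hcdef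
  have hc1 : c ≤ 1 := by
    have := ENNReal.toReal_mono (by simp) (prob_le_one (μ := P) (s := B))
    simpa using this
  have hgi : Integrable (fun ω => Set.indicator B (fun _ => (1:ℝ)) ω - c) P :=
    ((integrable_const (1:ℝ)).indicator hBm).sub (integrable_const c)
  have hKS : ∀ S : Set Ω, MeasurableSet[𝔪] S →
      |∫ ω in S, (Set.indicator B (fun _ => (1:ℝ)) ω - c) ∂P| ≤ φ := by
    intro S hS
    have hSm : MeasurableSet[mΩ] S := h𝔪 _ hS
    have e1 : ∫ ω in S, (Set.indicator B (fun _ => (1:ℝ)) ω - c) ∂P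
        = (P (S ∩ B)).toReal - (P S).toReal * c := by
      rw [integral_sub ((integrable_const (1:ℝ)).indicator hBm).integrableOn
        (integrableOn_const (measure_lt_top P S).ne)]
      rw [setIntegral_indicator (μ := P) hBm, setIntegral_const (μ := P) (1:ℝ),
        setIntegral_const (μ := P) c]
      simp [smul_eq_mul, Measure.real]
    rw [e1]
    calc |(P (S ∩ B)).toReal - (P S).toReal * c| ≤ φ * c := hmixB S hS
      _ ≤ φ * 1 := mul_le_mul_of_nonneg_left hc1 hφ
      _ = φ := mul_one φ
  have hcore := core1 (mΩ := mΩ) P h𝔪 ha hξ hξa hgi hKS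
  have e2 : ∫ ω, ξ ω * (Set.indicator B (fun _ => (1:ℝ)) ω - c) ∂P
      = ∫ ω in B, (ξ ω - ∫ x, ξ x ∂P) ∂P := by
    have eA : ∀ ω, ξ ω * (Set.indicator B (fun _ => (1:ℝ)) ω - c)
        = Set.indicator B ξ ω - c * ξ ω := by
      intro ω
      by_cases h : ω ∈ B <;> simp [Set.indicator_apply, h] <;> ring
    rw [integral_congr_ae (Filter.Eventually.of_forall eA),
      integral_sub (hξi.indicator hBm) (hξi.const_mul c),
      integral_indicator (μ := P) hBm, integral_const_mul]
    rw [integral_sub hξi.integrableOn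
      (integrableOn_const (measure_lt_top P B).ne)]
    rw [setIntegral_const (μ := P) (∫ x, ξ x ∂P)]
    simp only [smul_eq_mul, hcdef, Measure.real]
  rw [← e2]
  exact hcore

/-- Lemma `il` (ii) of the paper: there is a universal constant `C > 0` such that for any
probability space, sub-σ-algebras `𝔉₁, 𝔉₂` with uniform mixing coefficient at most `φ`,
and a.s. bounded `ξ, η` measurable w.r.t. `𝔉₁, 𝔉₂` with `|ξ| ≤ a`, `|η| ≤ b` a.s., one has
`|E(ξη) - EξEη| ≤ C a b φ`. -/
theorem mixing_covariance_bound_bounded :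
    ∃ C : ℝ, 0 < C ∧
      ∀ (Ω : Type) [mΩ : MeasurableSpace Ω] (P : Measure Ω),
        IsProbabilityMeasure P →
        ∀ (𝔉₁ 𝔉₂ : MeasurableSpace Ω), 𝔉₁ ≤ mΩ → 𝔉₂ ≤ mΩ →
        ∀ (φ : ℝ), 0 ≤ φ →
        (∀ A B : Set Ω, MeasurableSet[𝔉₁] A → MeasurableSet[𝔉₂] B →
          |(P (A ∩ B)).toReal - (P A).toReal * (P B).toReal| ≤ φ * (P B).toReal) →
        ∀ (ξ η : Ω → ℝ) (a b : ℝ),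
          Measurable[𝔉₁] ξ → Measurable[𝔉₂] η →
          (∀ᵐ ω ∂P, |ξ ω| ≤ a) → (∀ᵐ ω ∂P, |η ω| ≤ b) →
          |(∫ ω, ξ ω * η ω ∂P) - (∫ ω, ξ ω ∂P) * (∫ ω, η ω ∂P)| ≤ C * a * b * φ := by
  refine ⟨4, by norm_num, ?_⟩
  intro Ω mΩ P hP 𝔉₁ 𝔉₂ h1 h2 φ hφ hmix ξ η a b hξ hη hξa hηb
  letI : MeasurableSpace Ω := mΩ
  haveI : IsProbabilityMeasure P := hP
  haveI hne : (ae P).NeBot := ae_neBot.mpr (IsProbabilityMeasure.ne_zero P)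
  obtain ⟨ω₁, hω₁⟩ := hξa.exists
  obtain ⟨ω₂, hω₂⟩ := hηb.exists
  have ha : 0 ≤ a := (abs_nonneg _).trans hω₁
  have hb : 0 ≤ b := (abs_nonneg _).trans hω₂
  have hξA : Measurable[mΩ] ξ := hξ.mono h1 le_rfl
  have hηA : Measurable[mΩ] η := hη.mono h2 le_rfl
  have hξi : Integrable ξ P :=
    (integrable_const a).mono' hξA.aestronglyMeasurable
      (by simpa [Real.norm_eq_abs] using hξa)
  have hηi : Integrable η P :=
    (integrable_const b).mono' hηA.aestronglyMeasurable
      (by simpa [Real.norm_eq_abs] using hηb)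
  set Eξ : ℝ := ∫ x, ξ x ∂P with hEξ
  have hgi : Integrable (fun ω => ξ ω - Eξ) P := hξi.sub (integrable_const Eξ)
  -- step A: the signed measure S ↦ ∫_S (ξ - Eξ) is small on 𝔉₂-sets
  have stepA : ∀ S : Set Ω, MeasurableSet[𝔉₂] S →
      |∫ ω in S, (ξ ω - Eξ) ∂P| ≤ 2 * (φ * a) := by
    intro B hB
    exact stepA_aux (mΩ := mΩ) P h1 hφ ha hξ hξa hξi (h2 _ hB)
      (fun S hS => hmix S B hS hB)
  -- step B: apply core1 with the second σ-algebra
  have hcore := core1 (mΩ := mΩ) P h2 hb hη hηb hgi stepA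
  -- step C: identify the integral
  have hξηi : Integrable (fun ω => ξ ω * η ω) P :=
    hηi.bdd_mul (c := a) hξA.aestronglyMeasurable (by simpa [Real.norm_eq_abs] using hξa)
  have e3 : ∫ ω, η ω * (ξ ω - Eξ) ∂P
      = (∫ ω, ξ ω * η ω ∂P) - Eξ * ∫ ω, η ω ∂P := by
    have eA : ∀ ω, η ω * (ξ ω - Eξ) = ξ ω * η ω - Eξ * η ω := by
      intro ω; ring
    rw [integral_congr_ae (Filter.Eventually.of_forall eA),
      integral_sub hξηi (hηi.const_mul Eξ), integral_const_mul]
  calc |(∫ ω, ξ ω * η ω ∂P) - Eξ * ∫ ω, η ω ∂P|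
      = |∫ ω, η ω * (ξ ω - Eξ) ∂P| := by rw [e3]
    _ ≤ 2 * (2 * (φ * a) * b) := hcore
    _ = 4 * a * b * φ := by ring
end

section
/- There is a universal constant C > 0 with the following property. Let (Ω, Σ, P) be a probability space, N ≥ 1, and 𝔉₁, …, 𝔉_N ⊆ Σ sub-σ-algebras. Let φ ≥ 0 be such that for each k = 1, …, N−1, |P(A ∩ B) − P(A)P(B)| ≤ φ · P(B) holds for all A ∈ 𝔉_k and all B in the σ-algebra generated by 𝔉_{k+1} ∪ ⋯ ∪ 𝔉_N. Let ξ₁, …, ξ_N be real random variables with each ξ_k being 𝔉_k-measurable. Then | E( ∏_{k=1}^{N} e^{i ξ_k} ) − ∏_{k=1}^{N} E( e^{i ξ_k} ) | ≤ C · (N − 1) · φ. -/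
open MeasureTheory

section Aux

open Set
open scoped ENNReal
open scoped ENNReal

section Core

variable {Ω : Type} {m₁ m₂ : MeasurableSpace Ω} [mΩ : MeasurableSpace Ω]
  {P : Measure Ω} [IsProbabilityMeasure P] {φ : ℝ}

private lemma enn_of_real_ineq {a x c : ℝ≥0∞} (ha : a ≠ ⊤) (hx : x ≠ ⊤) (hc : c ≠ ⊤)
    (hφ : 0 ≤ φ) (h : a.toReal ≤ x.toReal + φ * c.toReal) :
    a ≤ x + ENNReal.ofReal φ * c := by
  calc a = ENNReal.ofReal a.toReal := (ENNReal.ofReal_toReal ha).symm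
    _ ≤ ENNReal.ofReal (x.toReal + φ * c.toReal) := ENNReal.ofReal_le_ofReal h
    _ ≤ x + ENNReal.ofReal φ * c := by
        refine le_trans (ENNReal.ofReal_add_le) ?_
        gcongr
        · exact le_of_eq (ENNReal.ofReal_toReal hx)
        · rw [ENNReal.ofReal_mul hφ, ENNReal.ofReal_toReal hc]

/-- Step 1: covariance of a `[0,1]`-valued `m₁`-measurable function against an `m₂`-set. -/
private lemma lintegral_set_bound (hm₁ : m₁ ≤ mΩ) (hm₂ : m₂ ≤ mΩ) (hφ : 0 ≤ φ)
    (hyp : ∀ A B : Set Ω, MeasurableSet[m₁] A → MeasurableSet[m₂] B →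
      |(P (A ∩ B)).toReal - (P A).toReal * (P B).toReal| ≤ φ * (P B).toReal)
    {f : Ω → ℝ} (hf : Measurable[m₁] f) (hf0 : ∀ ω, 0 ≤ f ω) (hf1 : ∀ ω, f ω ≤ 1)
    {B : Set Ω} (hB : MeasurableSet[m₂] B) :
    (∫⁻ ω in B, ENNReal.ofReal (f ω) ∂P)
        ≤ (∫⁻ ω, ENNReal.ofReal (f ω) ∂P) * P B + ENNReal.ofReal φ * P B ∧
    (∫⁻ ω, ENNReal.ofReal (f ω) ∂P) * P B
        ≤ (∫⁻ ω in B, ENNReal.ofReal (f ω) ∂P) + ENNReal.ofReal φ * P B := by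
  have hfm : Measurable f := hf.mono hm₁ le_rfl
  have hBm : MeasurableSet B := hm₂ _ hB
  have hA : ∀ t : ℝ, MeasurableSet[m₁] {a | t < f a} := fun t =>
    measurableSet_lt (@measurable_const _ _ _ m₁ _) hf
  have hAm : ∀ t : ℝ, MeasurableSet {a | t < f a} := fun t => hm₁ _ (hA t)
  -- two-sided set bounds in ℝ≥0∞
  have key : ∀ A : Set Ω, MeasurableSet[m₁] A →
      (P (A ∩ B) ≤ P A * P B + ENNReal.ofReal φ * P B ∧
       P A * P B ≤ P (A ∩ B) + ENNReal.ofReal φ * P B) := by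
    intro A hAset
    obtain ⟨h1, h2⟩ := abs_le.mp (hyp A B hAset hB)
    have hne : P A * P B ≠ ⊤ := ENNReal.mul_ne_top (measure_ne_top _ _) (measure_ne_top _ _)
    constructor
    · exact enn_of_real_ineq (measure_ne_top _ _) hne (measure_ne_top _ _)
        hφ (by rw [ENNReal.toReal_mul]; linarith)
    · exact enn_of_real_ineq hne (measure_ne_top _ _) (measure_ne_top _ _)
        hφ (by rw [ENNReal.toReal_mul]; linarith)
  -- layer cake
  have layerP : (∫⁻ ω, ENNReal.ofReal (f ω) ∂P) = ∫⁻ t in Ioi (0:ℝ), P {a | t < f a} :=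
    lintegral_eq_lintegral_meas_lt P (ae_of_all _ hf0) hfm.aemeasurable
  have layerB : (∫⁻ ω in B, ENNReal.ofReal (f ω) ∂P)
      = ∫⁻ t in Ioi (0:ℝ), P ({a | t < f a} ∩ B) := by
    rw [lintegral_eq_lintegral_meas_lt (P.restrict B) (ae_of_all _ hf0) hfm.aemeasurable]
    exact lintegral_congr fun t => by rw [Measure.restrict_apply (hAm t)]
  have hmeas_tail : Measurable fun t : ℝ => P {a | t < f a} := by
    apply Antitone.measurable
    intro t₁ t₂ h
    exact measure_mono fun a ha => lt_of_le_of_lt h ha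
  have hmeas_ind : Measurable fun t : ℝ =>
      (Ioc (0:ℝ) 1).indicator (fun _ => ENNReal.ofReal φ * P B) t :=
    measurable_const.indicator measurableSet_Ioc
  have hind_int : (∫⁻ t in Ioi (0:ℝ),
      (Ioc (0:ℝ) 1).indicator (fun _ => ENNReal.ofReal φ * P B) t) = ENNReal.ofReal φ * P B := by
    rw [lintegral_indicator measurableSet_Ioc, setLIntegral_const,
      Measure.restrict_apply measurableSet_Ioc,
      Set.inter_eq_self_of_subset_left Set.Ioc_subset_Ioi_self]
    simp [Real.volume_Ioc]
  have hempty : ∀ t : ℝ, 1 < t → {a | t < f a} = ∅ := by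
    intro t ht
    ext a; simp only [mem_setOf_eq, mem_empty_iff_false, iff_false, not_lt]
    exact le_trans (hf1 a) ht.le
  constructor
  · rw [layerB, layerP]
    calc (∫⁻ t in Ioi (0:ℝ), P ({a | t < f a} ∩ B))
        ≤ ∫⁻ t in Ioi (0:ℝ), (P {a | t < f a} * P B
            + (Ioc (0:ℝ) 1).indicator (fun _ => ENNReal.ofReal φ * P B) t) := by
          refine lintegral_mono_ae ?_
          filter_upwards [ae_restrict_mem measurableSet_Ioi] with t ht
          by_cases h1 : t ≤ 1
          · rw [Set.indicator_of_mem (show t ∈ Ioc (0:ℝ) 1 from ⟨ht, h1⟩)]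
            exact (key _ (hA t)).1
          · rw [hempty t (not_le.mp h1)]
            simp
      _ = (∫⁻ t in Ioi (0:ℝ), P {a | t < f a}) * P B + ENNReal.ofReal φ * P B := by
          rw [lintegral_add_right _ hmeas_ind, hind_int, lintegral_mul_const _ hmeas_tail]
  · rw [layerB, layerP]
    calc (∫⁻ t in Ioi (0:ℝ), P {a | t < f a}) * P B
        = ∫⁻ t in Ioi (0:ℝ), P {a | t < f a} * P B := by
          rw [lintegral_mul_const _ hmeas_tail]
      _ ≤ ∫⁻ t in Ioi (0:ℝ), (P ({a | t < f a} ∩ B)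
            + (Ioc (0:ℝ) 1).indicator (fun _ => ENNReal.ofReal φ * P B) t) := by
          refine lintegral_mono_ae ?_
          filter_upwards [ae_restrict_mem measurableSet_Ioi] with t ht
          by_cases h1 : t ≤ 1
          · rw [Set.indicator_of_mem (show t ∈ Ioc (0:ℝ) 1 from ⟨ht, h1⟩)]
            exact (key _ (hA t)).2
          · rw [hempty t (not_le.mp h1)]
            simp
      _ = (∫⁻ t in Ioi (0:ℝ), P ({a | t < f a} ∩ B)) + ENNReal.ofReal φ * P B := by
          rw [lintegral_add_right _ hmeas_ind, hind_int]


/-- Step 2: covariance bound for `[0,1]`-valued functions. -/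
private lemma cov01 (hm₁ : m₁ ≤ mΩ) (hm₂ : m₂ ≤ mΩ) (hφ : 0 ≤ φ)
    (hyp : ∀ A B : Set Ω, MeasurableSet[m₁] A → MeasurableSet[m₂] B →
      |(P (A ∩ B)).toReal - (P A).toReal * (P B).toReal| ≤ φ * (P B).toReal)
    {f g : Ω → ℝ} (hf : Measurable[m₁] f) (hf0 : ∀ ω, 0 ≤ f ω) (hf1 : ∀ ω, f ω ≤ 1)
    (hg : Measurable[m₂] g) (hg0 : ∀ ω, 0 ≤ g ω) (hg1 : ∀ ω, g ω ≤ 1) :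
    |(∫ ω, f ω * g ω ∂P) - (∫ ω, f ω ∂P) * ∫ ω, g ω ∂P| ≤ φ := by
  have hfm : Measurable f := hf.mono hm₁ le_rfl
  have hgm : Measurable g := hg.mono hm₂ le_rfl
  set F : Ω → ℝ≥0∞ := fun ω => ENNReal.ofReal (f ω) with hF
  set G : Ω → ℝ≥0∞ := fun ω => ENNReal.ofReal (g ω) with hG
  have hFm : Measurable F := ENNReal.measurable_ofReal.comp hfm
  have hGm : Measurable G := ENNReal.measurable_ofReal.comp hgm
  have hBt : ∀ t : ℝ, MeasurableSet[m₂] {a | t < g a} := fun t =>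
    measurableSet_lt (@measurable_const _ _ _ m₂ _) hg
  have hBtm : ∀ t : ℝ, MeasurableSet {a | t < g a} := fun t => hm₂ _ (hBt t)
  -- the one-sided lintegral bounds
  have key := fun t : ℝ => lintegral_set_bound hm₁ hm₂ hφ hyp hf hf0 hf1 (hBt t)
  set Q : Measure Ω := P.withDensity F with hQ
  have hQapp : ∀ t : ℝ, Q {a | t < g a} = ∫⁻ ω in {a | t < g a}, F ω ∂P := fun t =>
    withDensity_apply F (hBtm t)
  set If : ℝ≥0∞ := ∫⁻ ω, F ω ∂P with hIf
  set Ig : ℝ≥0∞ := ∫⁻ ω, G ω ∂P with hIg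
  set Ifg : ℝ≥0∞ := ∫⁻ ω, ENNReal.ofReal (f ω * g ω) ∂P with hIfg
  have hle1 : ∀ {h : Ω → ℝ}, (∀ ω, h ω ≤ 1) → (∫⁻ ω, ENNReal.ofReal (h ω) ∂P) ≤ 1 := by
    intro h h1
    calc (∫⁻ ω, ENNReal.ofReal (h ω) ∂P) ≤ ∫⁻ _, 1 ∂P :=
          lintegral_mono fun ω => ENNReal.ofReal_le_one.mpr (h1 ω)
      _ = 1 := by simp
  have hIf1 : If ≤ 1 := hle1 hf1
  have hIg1 : Ig ≤ 1 := hle1 hg1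
  have hIfg1 : Ifg ≤ 1 := hle1 fun ω => mul_le_one₀ (hf1 ω) (hg0 ω) (hg1 ω)
  have hIfne : If ≠ ⊤ := (lt_of_le_of_lt hIf1 (by norm_num)).ne
  have hIgne : Ig ≠ ⊤ := (lt_of_le_of_lt hIg1 (by norm_num)).ne
  have hIfgne : Ifg ≠ ⊤ := (lt_of_le_of_lt hIfg1 (by norm_num)).ne
  -- Ifg as integral of G against Q
  have hIfgQ : Ifg = ∫⁻ ω, G ω ∂Q := by
    rw [hIfg, hQ, lintegral_withDensity_eq_lintegral_mul P hFm hGm]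
    exact lintegral_congr fun ω => by
      simp only [Pi.mul_apply, hF, hG]
      exact ENNReal.ofReal_mul (hf0 ω)
  -- layer cake for G against Q and against P
  have layerQ : (∫⁻ ω, G ω ∂Q) = ∫⁻ t in Ioi (0:ℝ), Q {a | t < g a} :=
    lintegral_eq_lintegral_meas_lt Q (ae_of_all _ hg0) hgm.aemeasurable
  have layerP : Ig = ∫⁻ t in Ioi (0:ℝ), P {a | t < g a} :=
    lintegral_eq_lintegral_meas_lt P (ae_of_all _ hg0) hgm.aemeasurable
  have htail : Measurable fun t : ℝ => P {a | t < g a} := by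
    apply Antitone.measurable
    intro t₁ t₂ h
    exact measure_mono fun a ha => lt_of_le_of_lt h ha
  have hup : Ifg ≤ If * Ig + ENNReal.ofReal φ := by
    calc Ifg = ∫⁻ t in Ioi (0:ℝ), Q {a | t < g a} := by rw [hIfgQ, layerQ]
      _ ≤ ∫⁻ t in Ioi (0:ℝ), (If * P {a | t < g a} + ENNReal.ofReal φ * P {a | t < g a}) := by
          refine lintegral_mono fun t => ?_
          rw [hQapp t]
          exact (key t).1
      _ = If * Ig + ENNReal.ofReal φ * Ig := by
          rw [lintegral_add_left (htail.const_mul _), lintegral_const_mul _ htail,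
            lintegral_const_mul _ htail, ← layerP]
      _ ≤ If * Ig + ENNReal.ofReal φ := by
          gcongr
          exact le_trans (mul_le_mul_right hIg1 _) (by simp)
  have hdown : If * Ig ≤ Ifg + ENNReal.ofReal φ := by
    calc If * Ig = ∫⁻ t in Ioi (0:ℝ), If * P {a | t < g a} := by
          rw [lintegral_const_mul _ htail, ← layerP]
      _ ≤ ∫⁻ t in Ioi (0:ℝ), (Q {a | t < g a} + ENNReal.ofReal φ * P {a | t < g a}) := by
          refine lintegral_mono fun t => ?_
          rw [hQapp t]
          exact (key t).2
      _ = Ifg + ENNReal.ofReal φ * Ig := by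
          rw [lintegral_add_right _ (htail.const_mul _), lintegral_const_mul _ htail,
            ← layerP, hIfgQ, layerQ]
      _ ≤ Ifg + ENNReal.ofReal φ := by
          gcongr
          exact le_trans (mul_le_mul_right hIg1 _) (by simp)
  -- convert to real integrals
  have hintf : (∫ ω, f ω ∂P) = If.toReal := by
    rw [integral_eq_lintegral_of_nonneg_ae (ae_of_all _ hf0) hfm.aestronglyMeasurable]
  have hintg : (∫ ω, g ω ∂P) = Ig.toReal := by
    rw [integral_eq_lintegral_of_nonneg_ae (ae_of_all _ hg0) hgm.aestronglyMeasurable]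
  have hintfg : (∫ ω, f ω * g ω ∂P) = Ifg.toReal := by
    rw [integral_eq_lintegral_of_nonneg_ae (ae_of_all _ fun ω => mul_nonneg (hf0 ω) (hg0 ω))
      (hfm.mul hgm).aestronglyMeasurable]
  rw [hintf, hintg, hintfg, abs_le]
  have hmulne : If * Ig ≠ ⊤ := ENNReal.mul_ne_top hIfne hIgne
  have h1 := ENNReal.toReal_mono (by finiteness) hup
  rw [ENNReal.toReal_add hmulne ENNReal.ofReal_ne_top, ENNReal.toReal_mul,
    ENNReal.toReal_ofReal hφ] at h1
  have h2 := ENNReal.toReal_mono (by finiteness) hdown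
  rw [ENNReal.toReal_add hIfgne ENNReal.ofReal_ne_top, ENNReal.toReal_mul,
    ENNReal.toReal_ofReal hφ] at h2
  constructor <;> linarith


/-- Step 3: covariance bound for `[-1,1]`-valued functions. -/
private lemma cov11 (hm₁ : m₁ ≤ mΩ) (hm₂ : m₂ ≤ mΩ) (hφ : 0 ≤ φ)
    (hyp : ∀ A B : Set Ω, MeasurableSet[m₁] A → MeasurableSet[m₂] B →
      |(P (A ∩ B)).toReal - (P A).toReal * (P B).toReal| ≤ φ * (P B).toReal)
    {u s : Ω → ℝ} (hu : Measurable[m₁] u) (hu1 : ∀ ω, |u ω| ≤ 1)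
    (hs : Measurable[m₂] s) (hs1 : ∀ ω, |s ω| ≤ 1) :
    |(∫ ω, u ω * s ω ∂P) - (∫ ω, u ω ∂P) * ∫ ω, s ω ∂P| ≤ 4 * φ := by
  have hum : Measurable u := hu.mono hm₁ le_rfl
  have hsm : Measurable s := hs.mono hm₂ le_rfl
  have hIu : Integrable u P := by
    refine Integrable.mono' (integrable_const 1) hum.aestronglyMeasurable ?_
    exact ae_of_all _ fun ω => by simpa using hu1 ω
  have hIs : Integrable s P := by
    refine Integrable.mono' (integrable_const 1) hsm.aestronglyMeasurable ?_
    exact ae_of_all _ fun ω => by simpa using hs1 ω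
  have hIus : Integrable (fun ω => u ω * s ω) P := by
    refine Integrable.mono' (integrable_const 1) (hum.mul hsm).aestronglyMeasurable ?_
    refine ae_of_all _ fun ω => ?_
    rw [norm_mul]
    exact mul_le_one₀ (hu1 ω) (norm_nonneg _) (hs1 ω)
  set f : Ω → ℝ := fun ω => (u ω + 1) / 2 with hfdef
  set g : Ω → ℝ := fun ω => (s ω + 1) / 2 with hgdef
  have hf : Measurable[m₁] f := (hu.add_const 1).div_const 2
  have hg : Measurable[m₂] g := (hs.add_const 1).div_const 2
  have hf0 : ∀ ω, 0 ≤ f ω := fun ω => by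
    have := (abs_le.mp (hu1 ω)).1; simp only [hfdef]; linarith
  have hf1 : ∀ ω, f ω ≤ 1 := fun ω => by
    have := (abs_le.mp (hu1 ω)).2; simp only [hfdef]; linarith
  have hg0 : ∀ ω, 0 ≤ g ω := fun ω => by
    have := (abs_le.mp (hs1 ω)).1; simp only [hgdef]; linarith
  have hg1 : ∀ ω, g ω ≤ 1 := fun ω => by
    have := (abs_le.mp (hs1 ω)).2; simp only [hgdef]; linarith
  have key := cov01 hm₁ hm₂ hφ hyp hf hf0 hf1 hg hg0 hg1
  -- compute the three integrals
  have e1 : (∫ ω, f ω ∂P) = ((∫ ω, u ω ∂P) + 1) / 2 := by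
    simp only [hfdef]
    rw [integral_div, integral_add hIu (integrable_const 1)]
    simp
  have e2 : (∫ ω, g ω ∂P) = ((∫ ω, s ω ∂P) + 1) / 2 := by
    simp only [hgdef]
    rw [integral_div, integral_add hIs (integrable_const 1)]
    simp
  have e3 : (∫ ω, f ω * g ω ∂P)
      = ((∫ ω, u ω * s ω ∂P) + (∫ ω, u ω ∂P) + (∫ ω, s ω ∂P) + 1) / 4 := by
    have : ∀ ω, f ω * g ω = (u ω * s ω + u ω + s ω + 1) / 4 := fun ω => by
      simp only [hfdef, hgdef]; ring
    simp only [this]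
    have h2 : Integrable (fun ω => u ω * s ω + u ω) P := hIus.add hIu
    have h3 : Integrable (fun ω => u ω * s ω + u ω + s ω) P := h2.add hIs
    rw [integral_div, integral_add h3 (integrable_const 1),
      integral_add h2 hIs, integral_add hIus hIu]
    simp
  rw [e1, e2, e3] at key
  rw [abs_le] at key ⊢
  constructor <;> nlinarith [key.1, key.2]


/-- Step 4: covariance bound for complex functions of norm at most 1. -/
private lemma covC (hm₁ : m₁ ≤ mΩ) (hm₂ : m₂ ≤ mΩ) (hφ : 0 ≤ φ)
    (hyp : ∀ A B : Set Ω, MeasurableSet[m₁] A → MeasurableSet[m₂] B →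
      |(P (A ∩ B)).toReal - (P A).toReal * (P B).toReal| ≤ φ * (P B).toReal)
    {X Y : Ω → ℂ} (hX : Measurable[m₁] X) (hX1 : ∀ ω, ‖X ω‖ ≤ 1)
    (hY : Measurable[m₂] Y) (hY1 : ∀ ω, ‖Y ω‖ ≤ 1) :
    ‖(∫ ω, X ω * Y ω ∂P) - (∫ ω, X ω ∂P) * ∫ ω, Y ω ∂P‖ ≤ 16 * φ := by
  have hXm : Measurable X := hX.mono hm₁ le_rfl
  have hYm : Measurable Y := hY.mono hm₂ le_rfl
  set u : Ω → ℝ := fun ω => (X ω).re with hudef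
  set v : Ω → ℝ := fun ω => (X ω).im with hvdef
  set s : Ω → ℝ := fun ω => (Y ω).re with hsdef
  set t : Ω → ℝ := fun ω => (Y ω).im with htdef
  have hu : Measurable[m₁] u := Complex.measurable_re.comp hX
  have hv : Measurable[m₁] v := Complex.measurable_im.comp hX
  have hs : Measurable[m₂] s := Complex.measurable_re.comp hY
  have ht : Measurable[m₂] t := Complex.measurable_im.comp hY
  have hu1 : ∀ ω, |u ω| ≤ 1 := fun ω => le_trans (Complex.abs_re_le_norm _) (hX1 ω)
  have hv1 : ∀ ω, |v ω| ≤ 1 := fun ω => le_trans (Complex.abs_im_le_norm _) (hX1 ω)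
  have hs1 : ∀ ω, |s ω| ≤ 1 := fun ω => le_trans (Complex.abs_re_le_norm _) (hY1 ω)
  have ht1 : ∀ ω, |t ω| ≤ 1 := fun ω => le_trans (Complex.abs_im_le_norm _) (hY1 ω)
  have c1 := cov11 hm₁ hm₂ hφ hyp hu hu1 hs hs1
  have c2 := cov11 hm₁ hm₂ hφ hyp hv hv1 ht ht1
  have c3 := cov11 hm₁ hm₂ hφ hyp hu hu1 ht ht1
  have c4 := cov11 hm₁ hm₂ hφ hyp hv hv1 hs hs1
  -- integrability
  have hIX : Integrable X P := by
    refine Integrable.mono' (integrable_const 1) hXm.aestronglyMeasurable ?_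
    exact ae_of_all _ hX1
  have hIY : Integrable Y P := by
    refine Integrable.mono' (integrable_const 1) hYm.aestronglyMeasurable ?_
    exact ae_of_all _ hY1
  have hIXY : Integrable (fun ω => X ω * Y ω) P := by
    refine Integrable.mono' (integrable_const 1) (hXm.mul hYm).aestronglyMeasurable ?_
    refine ae_of_all _ fun ω => ?_
    rw [norm_mul]
    exact mul_le_one₀ (hX1 ω) (norm_nonneg _) (hY1 ω)
  have bd : ∀ {w : Ω → ℝ}, (∀ ω, |w ω| ≤ 1) → Measurable w → Integrable w P := by
    intro w h1 hm
    refine Integrable.mono' (integrable_const 1) hm.aestronglyMeasurable ?_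
    exact ae_of_all _ fun ω => by simpa using h1 ω
  have hum := hu.mono hm₁ le_rfl
  have hvm := hv.mono hm₁ le_rfl
  have hsm := hs.mono hm₂ le_rfl
  have htm := ht.mono hm₂ le_rfl
  have hIus : Integrable (fun ω => u ω * s ω) P := by
    refine Integrable.mono' (integrable_const 1) (hum.mul hsm).aestronglyMeasurable ?_
    exact ae_of_all _ fun ω => by
      rw [norm_mul]; exact mul_le_one₀ (hu1 ω) (norm_nonneg _) (hs1 ω)
  have hIvt : Integrable (fun ω => v ω * t ω) P := by
    refine Integrable.mono' (integrable_const 1) (hvm.mul htm).aestronglyMeasurable ?_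
    exact ae_of_all _ fun ω => by
      rw [norm_mul]; exact mul_le_one₀ (hv1 ω) (norm_nonneg _) (ht1 ω)
  have hIut : Integrable (fun ω => u ω * t ω) P := by
    refine Integrable.mono' (integrable_const 1) (hum.mul htm).aestronglyMeasurable ?_
    exact ae_of_all _ fun ω => by
      rw [norm_mul]; exact mul_le_one₀ (hu1 ω) (norm_nonneg _) (ht1 ω)
  have hIvs : Integrable (fun ω => v ω * s ω) P := by
    refine Integrable.mono' (integrable_const 1) (hvm.mul hsm).aestronglyMeasurable ?_
    exact ae_of_all _ fun ω => by
      rw [norm_mul]; exact mul_le_one₀ (hv1 ω) (norm_nonneg _) (hs1 ω)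
  -- component identities
  have hXre : (∫ ω, X ω ∂P).re = ∫ ω, u ω ∂P := (integral_re hIX).symm
  have hXim : (∫ ω, X ω ∂P).im = ∫ ω, v ω ∂P := (integral_im hIX).symm
  have hYre : (∫ ω, Y ω ∂P).re = ∫ ω, s ω ∂P := (integral_re hIY).symm
  have hYim : (∫ ω, Y ω ∂P).im = ∫ ω, t ω ∂P := (integral_im hIY).symm
  have hXYre : (∫ ω, X ω * Y ω ∂P).re = (∫ ω, u ω * s ω ∂P) - ∫ ω, v ω * t ω ∂P := by
    have h0 : (∫ ω, X ω * Y ω ∂P).re = ∫ ω, (X ω * Y ω).re ∂P := (integral_re hIXY).symm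
    rw [h0, ← integral_sub hIus hIvt]
    exact integral_congr_ae (ae_of_all _ fun ω => by
      simp [hudef, hvdef, hsdef, htdef, Complex.mul_re])
  have hXYim : (∫ ω, X ω * Y ω ∂P).im = (∫ ω, u ω * t ω ∂P) + ∫ ω, v ω * s ω ∂P := by
    have h0 : (∫ ω, X ω * Y ω ∂P).im = ∫ ω, (X ω * Y ω).im ∂P := (integral_im hIXY).symm
    rw [h0, ← integral_add hIut hIvs]
    exact integral_congr_ae (ae_of_all _ fun ω => by
      simp [hudef, hvdef, hsdef, htdef, Complex.mul_im])
  set D : ℂ := (∫ ω, X ω * Y ω ∂P) - (∫ ω, X ω ∂P) * ∫ ω, Y ω ∂P with hD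
  have hDre : D.re = ((∫ ω, u ω * s ω ∂P) - (∫ ω, u ω ∂P) * ∫ ω, s ω ∂P)
      - ((∫ ω, v ω * t ω ∂P) - (∫ ω, v ω ∂P) * ∫ ω, t ω ∂P) := by
    simp only [hD, Complex.sub_re, Complex.mul_re, hXre, hXim, hYre, hYim, hXYre]
    ring
  have hDim : D.im = ((∫ ω, u ω * t ω ∂P) - (∫ ω, u ω ∂P) * ∫ ω, t ω ∂P)
      + ((∫ ω, v ω * s ω ∂P) - (∫ ω, v ω ∂P) * ∫ ω, s ω ∂P) := by
    simp only [hD, Complex.sub_im, Complex.mul_im, hXre, hXim, hYre, hYim, hXYim]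
    ring
  calc ‖D‖ ≤ |D.re| + |D.im| := Complex.norm_le_abs_re_add_abs_im D
    _ ≤ (4 * φ + 4 * φ) + (4 * φ + 4 * φ) := by
        gcongr
        · rw [hDre]
          exact le_trans (abs_sub _ _) (add_le_add c1 c2)
        · rw [hDim]
          exact le_trans (abs_add_le _ _) (add_le_add c3 c4)
    _ = 16 * φ := by ring


/-- Step 5: telescoping over the product. -/
private lemma telescope (hφ : 0 ≤ φ) :
    ∀ (n : ℕ) (𝔉 : Fin n → MeasurableSpace Ω), (∀ k, 𝔉 k ≤ mΩ) →
    (∀ (k : Fin n) (A B : Set Ω), MeasurableSet[𝔉 k] A → MeasurableSet[⨆ j > k, 𝔉 j] B →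
      |(P (A ∩ B)).toReal - (P A).toReal * (P B).toReal| ≤ φ * (P B).toReal) →
    ∀ Z : Fin n → Ω → ℂ, (∀ k, Measurable[𝔉 k] (Z k)) → (∀ k ω, ‖Z k ω‖ ≤ 1) →
    ‖(∫ ω, ∏ k, Z k ω ∂P) - ∏ k, ∫ ω, Z k ω ∂P‖ ≤ 16 * φ * ((n - 1 : ℕ) : ℝ) := by
  intro n
  induction n with
  | zero =>
    intro 𝔉 h𝔉 hyp Z hZm hZ1
    simp
  | succ n ih =>
    intro 𝔉 h𝔉 hyp Z hZm hZ1
    rcases Nat.eq_zero_or_pos n with h0 | hn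
    · subst h0
      simp [Fin.prod_univ_one]
    -- main case
    have hm₂ : (⨆ j > (0 : Fin (n+1)), 𝔉 j) ≤ mΩ := iSup₂_le fun j _ => h𝔉 j
    set W : Ω → ℂ := fun ω => ∏ k : Fin n, Z k.succ ω with hWdef
    have hW : Measurable[⨆ j > (0 : Fin (n+1)), 𝔉 j] W := by
      refine Finset.measurable_prod _ fun k _ => ?_
      exact (hZm k.succ).mono
        (le_iSup₂ (f := fun j (_ : j > (0 : Fin (n+1))) => 𝔉 j) k.succ (Fin.succ_pos k)) le_rfl
    have hW1 : ∀ ω, ‖W ω‖ ≤ 1 := fun ω => by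
      rw [hWdef]
      simp only [norm_prod]
      exact Finset.prod_le_one (fun _ _ => norm_nonneg _) (fun k _ => hZ1 _ ω)
    have cov := covC (P := P) (h𝔉 0) hm₂ hφ (hyp 0) (hZm 0) (fun ω => hZ1 0 ω) hW hW1
    -- tail estimate
    have hyp' : ∀ (k : Fin n) (A B : Set Ω), MeasurableSet[𝔉 k.succ] A →
        MeasurableSet[⨆ j > k, 𝔉 (Fin.succ j)] B →
        |(P (A ∩ B)).toReal - (P A).toReal * (P B).toReal| ≤ φ * (P B).toReal := by
      intro k A B hA hB
      refine hyp k.succ A B hA ?_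
      have hle : (⨆ j > k, 𝔉 (Fin.succ j)) ≤ ⨆ j > k.succ, 𝔉 j :=
        iSup₂_le fun j hj =>
          le_iSup₂ (f := fun j (_ : j > Fin.succ k) => 𝔉 j) j.succ (Fin.succ_lt_succ_iff.mpr hj)
      exact hle _ hB
    have tail := ih (fun k => 𝔉 k.succ) (fun k => h𝔉 k.succ) hyp' (fun k => Z k.succ)
      (fun k => hZm k.succ) (fun k ω => hZ1 k.succ ω)
    -- integrability and bounds
    have hZ0m : Measurable (Z 0) := (hZm 0).mono (h𝔉 0) le_rfl
    have hZ0int : Integrable (Z 0) P := by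
      refine Integrable.mono' (integrable_const 1) hZ0m.aestronglyMeasurable ?_
      exact ae_of_all _ fun ω => hZ1 0 ω
    have hZ0le : ‖∫ ω, Z 0 ω ∂P‖ ≤ 1 := by
      calc ‖∫ ω, Z 0 ω ∂P‖ ≤ ∫ ω, ‖Z 0 ω‖ ∂P := norm_integral_le_integral_norm _
        _ ≤ ∫ _, (1:ℝ) ∂P := integral_mono hZ0int.norm (integrable_const 1) fun ω => hZ1 0 ω
        _ = 1 := by simp
    -- split the product
    have hsplit : (∫ ω, ∏ k, Z k ω ∂P) = ∫ ω, Z 0 ω * W ω ∂P := by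
      refine integral_congr_ae (ae_of_all _ fun ω => ?_)
      rw [hWdef]
      exact Fin.prod_univ_succ _
    have hsplit2 : (∏ k : Fin (n+1), ∫ ω, Z k ω ∂P)
        = (∫ ω, Z 0 ω ∂P) * ∏ k : Fin n, ∫ ω, Z k.succ ω ∂P := Fin.prod_univ_succ _
    have hcast : (((n+1) - 1 : ℕ) : ℝ) = (((n - 1 : ℕ) : ℝ)) + 1 := by
      have : ((n - 1 : ℕ) : ℝ) = (n : ℝ) - 1 := by
        rw [Nat.cast_sub hn]; simp
      simp [this]
    rw [hsplit, hsplit2, hcast]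
    have tri : ‖(∫ ω, Z 0 ω * W ω ∂P) - (∫ ω, Z 0 ω ∂P) * ∏ k : Fin n, ∫ ω, Z k.succ ω ∂P‖
        ≤ ‖(∫ ω, Z 0 ω * W ω ∂P) - (∫ ω, Z 0 ω ∂P) * ∫ ω, W ω ∂P‖
          + ‖(∫ ω, Z 0 ω ∂P) * (∫ ω, W ω ∂P) - (∫ ω, Z 0 ω ∂P) * ∏ k : Fin n, ∫ ω, Z k.succ ω ∂P‖ := by
      have := dist_triangle (∫ ω, Z 0 ω * W ω ∂P)
        ((∫ ω, Z 0 ω ∂P) * ∫ ω, W ω ∂P)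
        ((∫ ω, Z 0 ω ∂P) * ∏ k : Fin n, ∫ ω, Z k.succ ω ∂P)
      simpa [dist_eq_norm] using this
    have second : ‖(∫ ω, Z 0 ω ∂P) * (∫ ω, W ω ∂P)
          - (∫ ω, Z 0 ω ∂P) * ∏ k : Fin n, ∫ ω, Z k.succ ω ∂P‖
        ≤ 16 * φ * ((n - 1 : ℕ) : ℝ) := by
      rw [← mul_sub, norm_mul]
      calc ‖∫ ω, Z 0 ω ∂P‖ * ‖(∫ ω, W ω ∂P) - ∏ k : Fin n, ∫ ω, Z k.succ ω ∂P‖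
          ≤ 1 * (16 * φ * ((n - 1 : ℕ) : ℝ)) := by
            exact mul_le_mul hZ0le tail (norm_nonneg _) zero_le_one
        _ = 16 * φ * ((n - 1 : ℕ) : ℝ) := one_mul _
    calc ‖(∫ ω, Z 0 ω * W ω ∂P) - (∫ ω, Z 0 ω ∂P) * ∏ k : Fin n, ∫ ω, Z k.succ ω ∂P‖
        ≤ ‖(∫ ω, Z 0 ω * W ω ∂P) - (∫ ω, Z 0 ω ∂P) * ∫ ω, W ω ∂P‖
          + ‖(∫ ω, Z 0 ω ∂P) * (∫ ω, W ω ∂P)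
            - (∫ ω, Z 0 ω ∂P) * ∏ k : Fin n, ∫ ω, Z k.succ ω ∂P‖ := tri
      _ ≤ 16 * φ + 16 * φ * ((n - 1 : ℕ) : ℝ) := add_le_add cov second
      _ = 16 * φ * (((n - 1 : ℕ) : ℝ) + 1) := by ring

end Core



/-- Recursive factorization estimate (7.24') of the paper: there is a universal constant
`C > 0` such that for any probability space, sub-σ-algebras `𝔉₁, …, 𝔉_N` whose uniform
mixing coefficient of each `𝔉_k` against the σ-algebra generated by the later ones is at
most `φ`, and real random variables `ξ_k` measurable w.r.t. `𝔉_k`, one has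
`|E ∏ e^{iξ_k} - ∏ E e^{iξ_k}| ≤ C (N-1) φ`. -/
theorem mixing_characteristic_functional_factorization :
    ∃ C : ℝ, 0 < C ∧
      ∀ (Ω : Type) [mΩ : MeasurableSpace Ω] (P : Measure Ω),
        IsProbabilityMeasure P →
        ∀ (N : ℕ), 1 ≤ N →
        ∀ (𝔉 : Fin N → MeasurableSpace Ω), (∀ k, 𝔉 k ≤ mΩ) →
        ∀ (φ : ℝ), 0 ≤ φ →
        (∀ (k : Fin N) (A B : Set Ω), MeasurableSet[𝔉 k] A →
          MeasurableSet[⨆ j > k, 𝔉 j] B →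
          |(P (A ∩ B)).toReal - (P A).toReal * (P B).toReal| ≤ φ * (P B).toReal) →
        ∀ ξ : Fin N → Ω → ℝ, (∀ k, Measurable[𝔉 k] (ξ k)) →
        ‖(∫ ω, (∏ k, Complex.exp (Complex.I * (ξ k ω : ℝ))) ∂P) -
            ∏ k, ∫ ω, Complex.exp (Complex.I * (ξ k ω : ℝ)) ∂P‖ ≤
          C * ((N : ℝ) - 1) * φ := by
  refine ⟨16, by norm_num, ?_⟩
  intro Ω mΩ P hP N hN 𝔉 h𝔉 φ hφ hyp ξ hξ
  have hZm : ∀ k, Measurable[𝔉 k] (fun ω => Complex.exp (Complex.I * (ξ k ω : ℝ))) := by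
    intro k
    exact Complex.measurable_exp.comp ((Complex.measurable_ofReal.comp (hξ k)).const_mul Complex.I)
  have hZ1 : ∀ (k : Fin N) ω, ‖Complex.exp (Complex.I * (ξ k ω : ℝ))‖ ≤ 1 := by
    intro k ω
    rw [Complex.norm_exp]
    simp [Complex.mul_re]
  have := telescope (P := P) hφ N 𝔉 h𝔉 hyp
    (fun k ω => Complex.exp (Complex.I * (ξ k ω : ℝ))) hZm hZ1
  refine le_trans this (le_of_eq ?_)
  rw [Nat.cast_sub hN]
  push_cast
  ring
end Aux
end

section
/- Let ν : [0,∞) → [0,∞) be nonincreasing with ∫₀^∞ r ν(r) dr < ∞, and let F : ℝ³ → ℝ be measurable with |F(p)| ≤ ν(|p|) for all p. Define g(x) = (1/(4π)²) ∫_{{ω : |ω| = 1, ω₃ > 0}} [ ∫_{{p ∈ ℝ³ : ⟨p, ω⟩ = ⟨x, ω⟩}} F(p) dH²(p) ] dS(ω). Then g is bounded on ℝ³ and g(x) → 0 as |x| → ∞. -/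
open MeasureTheory Filter Set
open scoped ENNReal NNReal RealInnerProductSpace

noncomputable section
namespace RadonAux

variable {h : ℝ → ℝ≥0∞}

def psi (h : ℝ → ℝ≥0∞) (a : ℝ) : ℝ≥0∞ := ∫⁻ r in Ioi a, ENNReal.ofReal r * h r

lemma psi_anti (h : ℝ → ℝ≥0∞) : Antitone (psi h) := fun _ _ hab =>
  lintegral_mono_set (Ioi_subset_Ioi hab)

lemma ofReal_two : ENNReal.ofReal (2:ℝ) = 2 := by
  rw [show ((2:ℝ)) = ((2:ℕ):ℝ) by norm_num, ENNReal.ofReal_natCast]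
  norm_num

lemma lintegral_Iio_neg (F : ℝ → ℝ≥0∞) (hF : Measurable F) (a : ℝ) :
    ∫⁻ t in Iio (-a), F (-t) = ∫⁻ t in Ioi a, F t := by
  have hmap : Measure.map (fun t : ℝ => -t) volume = volume := Measure.map_neg_eq_self volume
  have hpre : (fun t : ℝ => -t) ⁻¹' Ioi a = Iio (-a) := by
    ext t
    simp only [mem_preimage, mem_Ioi, mem_Iio]
    constructor <;> intro <;> linarith
  have : (volume : Measure ℝ).restrict (Ioi a)
      = Measure.map (fun t : ℝ => -t) (volume.restrict (Iio (-a))) := by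
    rw [← hpre, ← Measure.restrict_map measurable_neg measurableSet_Ioi, hmap]
  rw [this, lintegral_map hF measurable_neg]

lemma lintegral_split (F : ℝ → ℝ≥0∞) (a : ℝ) (ha : 0 ≤ a) :
    ∫⁻ t, F t = (∫⁻ t in Icc (-a) a, F t) + (∫⁻ t in Iio (-a), F t) + (∫⁻ t in Ioi a, F t) := by
  have huniv : Icc (-a) a ∪ (Iio (-a) ∪ Ioi a) = univ := by
    ext t
    simp only [mem_union, mem_Icc, mem_Iio, mem_Ioi, mem_univ, iff_true]
    by_cases h1 : t < -a
    · exact Or.inr (Or.inl h1)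
    · by_cases h2 : a < t
      · exact Or.inr (Or.inr h2)
      · exact Or.inl ⟨by linarith, by linarith⟩
  have hd1 : Disjoint (Iio (-a)) (Ioi a) := by
    rw [Set.disjoint_left]; intro t ht1 ht2
    simp only [mem_Iio] at ht1; simp only [mem_Ioi] at ht2; linarith
  have hd2 : Disjoint (Icc (-a) a) (Iio (-a) ∪ Ioi a) := by
    rw [Set.disjoint_left]; rintro t ⟨ht1, ht2⟩ (ht | ht)
    · simp only [mem_Iio] at ht; linarith
    · simp only [mem_Ioi] at ht; linarith
  rw [← setLIntegral_univ, ← huniv,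
    lintegral_union (measurableSet_Iio.union measurableSet_Ioi) hd2,
    lintegral_union measurableSet_Ioi hd1, add_assoc]

lemma lintegral_max_abs (F : ℝ → ℝ≥0∞) (hF : Measurable F) (a : ℝ) (ha : 0 ≤ a) :
    ∫⁻ t, F (max a |t|) = F a * ENNReal.ofReal (2 * a) + 2 * ∫⁻ t in Ioi a, F t := by
  have e1 : ∫⁻ t in Icc (-a) a, F (max a |t|) = F a * ENNReal.ofReal (2 * a) := by
    rw [setLIntegral_congr_fun measurableSet_Icc
      (fun t ht => by
        rcases ht with ⟨h1, h2⟩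
        rw [max_eq_left (abs_le.mpr ⟨h1, h2⟩)]),
      setLIntegral_const, Real.volume_Icc]
    congr 2
    ring
  have e3 : ∫⁻ t in Ioi a, F (max a |t|) = ∫⁻ t in Ioi a, F t := by
    refine setLIntegral_congr_fun measurableSet_Ioi (fun t ht => ?_)
    rw [abs_of_pos (lt_of_le_of_lt ha ht), max_eq_right (le_of_lt ht)]
  have e2 : ∫⁻ t in Iio (-a), F (max a |t|) = ∫⁻ t in Ioi a, F t := by
    have hrefl := lintegral_Iio_neg (fun t => F (max a |t|))
      (hF.comp (measurable_const.max (measurable_id.abs))) a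
    rw [← e3, ← hrefl]
    refine setLIntegral_congr_fun measurableSet_Iio (fun t _ => by simp only [abs_neg])
  rw [lintegral_split (fun t => F (max a |t|)) a ha, e1, e2, e3]
  ring

lemma swap_bound (hh : Antitone h) (a : ℝ) (ha : 0 ≤ a) :
    ∫⁻ t in Ioi a, (∫⁻ s in Ioi t, h s) ≤ psi h a := by
  have hhm : Measurable h := hh.measurable
  set U : ℝ × ℝ → ℝ≥0∞ := ({z : ℝ × ℝ | a < z.1 ∧ z.1 < z.2}).indicator (fun z => h z.2) with hU
  have hUm : Measurable U := by
    refine Measurable.indicator (hhm.comp measurable_snd) ?_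
    exact MeasurableSet.inter (measurable_fst measurableSet_Ioi)
      (measurableSet_lt measurable_fst measurable_snd)
  have step1 : ∫⁻ t in Ioi a, (∫⁻ s in Ioi t, h s) = ∫⁻ t, ∫⁻ s, U (t, s) := by
    rw [← lintegral_indicator measurableSet_Ioi]
    refine lintegral_congr fun t => ?_
    rw [indicator_apply]
    split_ifs with ht
    · rw [← lintegral_indicator (measurableSet_Ioi (a := t))]
      refine lintegral_congr fun s => ?_
      rw [indicator_apply, hU, indicator_apply]
      by_cases hs : s ∈ Ioi t
      · rw [if_pos hs, if_pos (show (t,s) ∈ {z : ℝ×ℝ | a < z.1 ∧ z.1 < z.2} from ⟨ht, hs⟩)]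
      · rw [if_neg hs, if_neg (fun hz => hs hz.2)]
    · symm
      rw [← lintegral_zero]
      refine lintegral_congr fun s => ?_
      rw [hU, indicator_apply, if_neg (fun hz => ht hz.1)]
  have step2 : ∫⁻ t, ∫⁻ s, U (t, s) = ∫⁻ s, ∫⁻ t, U (t, s) :=
    lintegral_lintegral_swap hUm.aemeasurable
  have step3 : ∀ s : ℝ, ∫⁻ t, U (t, s) = h s * volume (Ioo a s) := by
    intro s
    have hset : (fun t => U (t, s)) = (Ioo a s).indicator (fun _ => h s) := by
      ext t
      rw [hU, indicator_apply, indicator_apply]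
      by_cases htm : t ∈ Ioo a s
      · rw [if_pos htm, if_pos (show (t,s) ∈ {z : ℝ×ℝ | a < z.1 ∧ z.1 < z.2} from ⟨htm.1, htm.2⟩)]
      · rw [if_neg htm, if_neg (fun hz => htm ⟨hz.1, hz.2⟩)]
    rw [hset, lintegral_indicator measurableSet_Ioo, setLIntegral_const]
  calc ∫⁻ t in Ioi a, (∫⁻ s in Ioi t, h s) = ∫⁻ s, h s * volume (Ioo a s) := by
        rw [step1, step2]; exact lintegral_congr step3
    _ ≤ ∫⁻ s, (Ioi a).indicator (fun s => ENNReal.ofReal s * h s) s := by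
        refine lintegral_mono fun s => ?_
        rw [indicator_apply]
        split_ifs with hs
        · rw [Real.volume_Ioo, mul_comm]
          exact mul_le_mul_left (ENNReal.ofReal_le_ofReal (by simp only [mem_Ioi] at hs; linarith)) _
        · rw [Real.volume_Ioo, ENNReal.ofReal_eq_zero.mpr
            (by simp only [mem_Ioi, not_lt] at hs; linarith), mul_zero]
    _ = psi h a := by rw [lintegral_indicator measurableSet_Ioi]; rfl

lemma sq_mul_le (hh : Antitone h) (a : ℝ) (ha : 0 ≤ a) :
    ENNReal.ofReal a * ENNReal.ofReal a * h a ≤ 4 * psi h (a / 2) := by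
  have step : ENNReal.ofReal (a/2) * ENNReal.ofReal (a/2) * h a ≤ psi h (a/2) := by
    have hconst : ENNReal.ofReal (a/2) * ENNReal.ofReal (a/2) * h a
        = ∫⁻ _ in Ioc (a/2) a, (ENNReal.ofReal (a/2) * h a) := by
      rw [setLIntegral_const, Real.volume_Ioc]
      rw [show a - a/2 = a/2 by ring]
      ring
    rw [hconst]
    calc ∫⁻ _ in Ioc (a/2) a, ENNReal.ofReal (a/2) * h a
        ≤ ∫⁻ r in Ioc (a/2) a, ENNReal.ofReal r * h r := by
          refine setLIntegral_mono (ENNReal.measurable_ofReal.mul hh.measurable) fun r hr => ?_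
          exact mul_le_mul' (ENNReal.ofReal_le_ofReal (le_of_lt hr.1)) (hh hr.2)
      _ ≤ psi h (a/2) := lintegral_mono_set Ioc_subset_Ioi_self
  have ha2 : ENNReal.ofReal a = 2 * ENNReal.ofReal (a/2) := by
    rw [show a = 2*(a/2) by ring, ENNReal.ofReal_mul (by norm_num : (0:ℝ) ≤ 2), ofReal_two]
    rw [show (2:ℝ) * (a/2) / 2 = a / 2 by ring]
  calc ENNReal.ofReal a * ENNReal.ofReal a * h a
      = 4 * (ENNReal.ofReal (a/2) * ENNReal.ofReal (a/2) * h a) := by rw [ha2]; ring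
    _ ≤ 4 * psi h (a/2) := by gcongr

lemma tail_bound (hh : Antitone h) (a : ℝ) :
    ENNReal.ofReal a * ∫⁻ s in Ioi a, h s ≤ psi h a := by
  rw [← lintegral_const_mul _ hh.measurable]
  refine setLIntegral_mono (ENNReal.measurable_ofReal.mul hh.measurable) fun s hs => ?_
  exact mul_le_mul' (ENNReal.ofReal_le_ofReal (le_of_lt hs)) le_rfl

lemma planar_bound (hh : Antitone h) (a : ℝ) (ha : 0 ≤ a) :
    ∫⁻ y : ℝ × ℝ, h (max a (max |y.1| |y.2|)) ≤ 28 * psi h (a / 2) := by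
  have hhm : Measurable h := hh.measurable
  have hpsiha : psi h a ≤ psi h (a/2) := psi_anti h (by linarith)
  set ψh : ℝ → ℝ≥0∞ := fun c => ∫⁻ s in Ioi c, h s with hψh
  have hψhm : Measurable ψh :=
    Antitone.measurable fun c c' hcc => lintegral_mono_set (Ioi_subset_Ioi hcc)
  have tonelli : ∫⁻ y : ℝ × ℝ, h (max a (max |y.1| |y.2|))
      = ∫⁻ t, ∫⁻ s, h (max (max a |t|) |s|) := by
    rw [Measure.volume_eq_prod, lintegral_prod]
    · simp only [max_assoc]
    · exact (hhm.comp
        (measurable_const.max ((measurable_fst.abs).max (measurable_snd.abs)))).aemeasurable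
  rw [tonelli]
  have inner_eq : ∀ t : ℝ, ∫⁻ s, h (max (max a |t|) |s|)
      = h (max a |t|) * ENNReal.ofReal (2 * max a |t|) + 2 * ψh (max a |t|) := by
    intro t
    exact lintegral_max_abs h hhm (max a |t|) (le_trans ha (le_max_left _ _))
  have expand : ∀ c : ℝ, h c * ENNReal.ofReal (2 * c) = 2 * (ENNReal.ofReal c * h c) := by
    intro c
    rw [ENNReal.ofReal_mul (by norm_num : (0:ℝ) ≤ 2), ofReal_two]
    ring
  have hA : ∫⁻ t, ENNReal.ofReal (max a |t|) * h (max a |t|)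
      = (ENNReal.ofReal a * h a) * ENNReal.ofReal (2*a) + 2 * psi h a := by
    have := lintegral_max_abs (fun c => ENNReal.ofReal c * h c)
      (ENNReal.measurable_ofReal.mul hhm) a ha
    simpa [psi] using this
  calc ∫⁻ t, ∫⁻ s, h (max (max a |t|) |s|)
      = ∫⁻ t, (2 * (ENNReal.ofReal (max a |t|) * h (max a |t|)) + 2 * ψh (max a |t|)) := by
        refine lintegral_congr fun t => ?_
        rw [inner_eq t, expand]
    _ = 2 * (∫⁻ t, ENNReal.ofReal (max a |t|) * h (max a |t|)) + 2 * ∫⁻ t, ψh (max a |t|) := by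
        rw [lintegral_add_left, lintegral_const_mul, lintegral_const_mul]
        · exact hψhm.comp (measurable_const.max measurable_id.abs)
        · exact (ENNReal.measurable_ofReal.mul hhm).comp
            (measurable_const.max measurable_id.abs)
        · exact (measurable_const.mul ((ENNReal.measurable_ofReal.mul hhm).comp
            (measurable_const.max measurable_id.abs)))
    _ ≤ 20 * psi h (a/2) + 8 * psi h (a/2) := by
        gcongr ?_ + ?_
        · rw [hA]
          have t1 : (ENNReal.ofReal a * h a) * ENNReal.ofReal (2*a) ≤ 8 * psi h (a/2) := by
            rw [ENNReal.ofReal_mul (by norm_num : (0:ℝ) ≤ 2), ofReal_two]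
            calc ENNReal.ofReal a * h a * (2 * ENNReal.ofReal a)
                = 2 * (ENNReal.ofReal a * ENNReal.ofReal a * h a) := by ring
              _ ≤ 2 * (4 * psi h (a/2)) := mul_le_mul_right (sq_mul_le hh a ha) 2
              _ = 8 * psi h (a/2) := by ring
          calc 2 * ((ENNReal.ofReal a * h a) * ENNReal.ofReal (2*a) + 2 * psi h a)
              ≤ 2 * (8 * psi h (a/2) + 2 * psi h (a/2)) := by gcongr
            _ = 20 * psi h (a/2) := by ring
        · rw [lintegral_max_abs ψh hψhm a ha]
          have t3 : ψh a * ENNReal.ofReal (2 * a) ≤ 2 * psi h a := by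
            rw [ENNReal.ofReal_mul (by norm_num : (0:ℝ) ≤ 2), ofReal_two]
            calc ψh a * (2 * ENNReal.ofReal a) = 2 * (ENNReal.ofReal a * ψh a) := by ring
              _ ≤ 2 * psi h a := mul_le_mul_right (tail_bound hh a) 2
          have t4 : ∫⁻ t in Ioi a, ψh t ≤ psi h a := swap_bound hh a ha
          calc 2 * (ψh a * ENNReal.ofReal (2 * a) + 2 * ∫⁻ t in Ioi a, ψh t)
              ≤ 2 * (2 * psi h a + 2 * psi h a) := by gcongr
            _ = 8 * psi h a := by ring
            _ ≤ 8 * psi h (a/2) := by gcongr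
    _ = 28 * psi h (a / 2) := by ring


lemma lintegral_le_of_cover {K : ℝ≥0} {G : ℝ × ℝ → EuclideanSpace ℝ (Fin 3)}
    {T : Set (ℝ × ℝ)} (hGc : Continuous G)
    (hG : LipschitzOnWith K G T) {S : Set (EuclideanSpace ℝ (Fin 3))} (hS : S ⊆ G '' T)
    (f : EuclideanSpace ℝ (Fin 3) → ℝ≥0∞) :
    ∫⁻ x in S, f x ∂μH[2] ≤ (K : ℝ≥0∞) ^ (2:ℝ) * ∫⁻ y in T, f (G y) := by
  have hmeas : μH[2].restrict S ≤ ((K : ℝ≥0∞) ^ (2:ℝ)) • (Measure.map G (volume.restrict T)) := by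
    refine Measure.le_iff.mpr fun A hA => ?_
    rw [Measure.restrict_apply hA, Measure.smul_apply, Measure.map_apply hGc.measurable hA,
      Measure.restrict_apply (hGc.measurable hA), smul_eq_mul]
    have hsub : A ∩ S ⊆ G '' (G ⁻¹' A ∩ T) := by
      rintro p ⟨hpA, hpS⟩
      obtain ⟨y, hyT, rfl⟩ := hS hpS
      exact ⟨y, ⟨hpA, hyT⟩, rfl⟩
    calc μH[2] (A ∩ S) ≤ μH[2] (G '' (G ⁻¹' A ∩ T)) := measure_mono hsub
      _ ≤ (K : ℝ≥0∞) ^ (2:ℝ) * μH[2] (G ⁻¹' A ∩ T) :=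
          (hG.mono inter_subset_right).hausdorffMeasure_image_le (by norm_num)
      _ = (K : ℝ≥0∞) ^ (2:ℝ) * volume (G ⁻¹' A ∩ T) := by
          rw [MeasureTheory.hausdorffMeasure_prod_real]
  calc ∫⁻ x in S, f x ∂μH[2]
      ≤ ∫⁻ x, f x ∂(((K : ℝ≥0∞) ^ (2:ℝ)) • Measure.map G (volume.restrict T)) :=
        lintegral_mono' hmeas le_rfl
    _ = (K : ℝ≥0∞) ^ (2:ℝ) * ∫⁻ x, f x ∂(Measure.map G (volume.restrict T)) :=
        lintegral_smul_measure _ _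
    _ ≤ _ := by gcongr; exact lintegral_map_le f G

lemma exists_onb {ω : EuclideanSpace ℝ (Fin 3)} (hω : ‖ω‖ = 1) :
    ∃ b : OrthonormalBasis (Fin 3) ℝ (EuclideanSpace ℝ (Fin 3)), b 0 = ω := by
  have hcard : Module.finrank ℝ (EuclideanSpace ℝ (Fin 3)) = Fintype.card (Fin 3) := by simp
  have horth : Orthonormal ℝ (({0} : Set (Fin 3)).restrict (fun _ : Fin 3 => ω)) := by
    constructor
    · intro i; exact hω
    · intro i j hij
      exact absurd (Subtype.ext (by rw [i.2, j.2])) hij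
  obtain ⟨b, hb⟩ := horth.exists_orthonormalBasis_extension_of_card_eq hcard
  exact ⟨b, hb 0 rfl⟩

lemma two_rpow_two : ((2 : ℝ≥0) : ℝ≥0∞) ^ (2:ℝ) = 4 := by
  rw [show (2:ℝ) = ((2:ℕ):ℝ) by norm_num, ENNReal.rpow_natCast]
  norm_num

lemma plane_lintegral_bound (h : ℝ → ℝ≥0∞) (hh : Antitone h)
    (x ω : EuclideanSpace ℝ (Fin 3)) (hω : ‖ω‖ = 1) :
    ∫⁻ p in {p : EuclideanSpace ℝ (Fin 3) | ⟪p, ω⟫ = ⟪x, ω⟫}, h ‖p‖ ∂μH[2]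
      ≤ 4 * ∫⁻ y : ℝ × ℝ, h (max |⟪x, ω⟫| (max |y.1| |y.2|)) := by
  obtain ⟨b, hb0⟩ := exists_onb hω
  set d : ℝ := ⟪x, ω⟫ with hd
  set G : ℝ × ℝ → EuclideanSpace ℝ (Fin 3) := fun y => d • b 0 + y.1 • b 1 + y.2 • b 2 with hG
  have hio : ∀ i j, ⟪b i, b j⟫ = if i = j then (1:ℝ) else 0 := orthonormal_iff_ite.mp b.orthonormal
  have hinner : ∀ (y : ℝ × ℝ) (i : Fin 3),
      ⟪b i, G y⟫ = d * ⟪b i, b 0⟫ + y.1 * ⟪b i, b 1⟫ + y.2 * ⟪b i, b 2⟫ := by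
    intro y i
    simp only [hG, inner_add_right, real_inner_smul_right]
  have hGc : Continuous G := by
    rw [hG]
    exact (continuous_const.add ((continuous_fst).smul continuous_const)).add
      ((continuous_snd).smul continuous_const)
  have hGlip : LipschitzWith 2 G := by
    apply LipschitzWith.of_dist_le_mul
    intro y y'
    have hdiff : G y - G y' = (y.1 - y'.1) • b 1 + (y.2 - y'.2) • b 2 := by
      simp only [hG]
      module
    rw [dist_eq_norm, hdiff, Prod.dist_eq]
    calc ‖(y.1 - y'.1) • b 1 + (y.2 - y'.2) • b 2‖
        ≤ ‖(y.1 - y'.1) • b 1‖ + ‖(y.2 - y'.2) • b 2‖ := norm_add_le _ _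
      _ = |y.1 - y'.1| + |y.2 - y'.2| := by
          rw [norm_smul, norm_smul, b.orthonormal.1, b.orthonormal.1]
          simp [Real.norm_eq_abs]
      _ ≤ 2 * max (dist y.1 y'.1) (dist y.2 y'.2) := by
          rw [Real.dist_eq, Real.dist_eq]
          have h1 := le_max_left |y.1 - y'.1| |y.2 - y'.2|
          have h2 := le_max_right |y.1 - y'.1| |y.2 - y'.2|
          push_cast
          linarith
  have hcover : {p : EuclideanSpace ℝ (Fin 3) | ⟪p, ω⟫ = ⟪x, ω⟫} ⊆ G '' univ := by
    intro p hp
    refine ⟨(⟪b 1, p⟫, ⟪b 2, p⟫), trivial, ?_⟩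
    have hrepr := b.sum_repr p
    rw [Fin.sum_univ_three] at hrepr
    simp only [b.repr_apply_apply] at hrepr
    rw [hb0, real_inner_comm p ω] at hrepr
    have hp' : ⟪p, ω⟫ = d := hp
    rw [hp'] at hrepr
    simp only [hG]
    rw [hb0]
    exact hrepr
  have key := lintegral_le_of_cover (K := 2) hGc hGlip.lipschitzOnWith hcover
    (fun p => h ‖p‖)
  rw [Measure.restrict_univ, two_rpow_two] at key
  refine key.trans ?_
  gcongr with y
  refine hh ?_
  have hnorm : ∀ i : Fin 3, |⟪b i, G y⟫| ≤ ‖G y‖ := by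
    intro i
    calc |⟪b i, G y⟫| ≤ ‖b i‖ * ‖G y‖ := abs_real_inner_le_norm _ _
      _ = ‖G y‖ := by rw [b.orthonormal.1 i, one_mul]
  have e0 := hnorm 0; have e1 := hnorm 1; have e2 := hnorm 2
  rw [hinner y 0, hio, hio, hio] at e0
  rw [hinner y 1, hio, hio, hio] at e1
  rw [hinner y 2, hio, hio, hio] at e2
  simp at e0 e1 e2
  exact max_le e0 (max_le e1 e2)


abbrev E3 := EuclideanSpace ℝ (Fin 3)

def nmap (v : E3) : E3 := ‖v‖⁻¹ • v
def eV (i : Fin 3) : E3 := EuclideanSpace.single i 1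
def Amap (i : Fin 3) (ε : ℝ) : ℝ × ℝ → E3 := fun y => ε • eV i + y.1 • eV (i+1) + y.2 • eV (i+2)
def Q2 : Set (ℝ × ℝ) := Icc (-1:ℝ) 1 ×ˢ Icc (-1:ℝ) 1

lemma eV_norm (i : Fin 3) : ‖eV i‖ = 1 := by simp [eV]

lemma eV_inner_ne {i j : Fin 3} (hij : i ≠ j) : ⟪eV i, eV j⟫ = 0 := by
  simp [eV, EuclideanSpace.inner_single_right, EuclideanSpace.single_apply,
    Ne.symm hij]

lemma inner_eV (x : E3) (j : Fin 3) : ⟪x, eV j⟫ = x j := by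
  simp [eV, EuclideanSpace.inner_single_right]

lemma fin3_distinct (i : Fin 3) : i ≠ i + 1 ∧ i ≠ i + 2 ∧ i + 1 ≠ i + 2 := by revert i; decide

lemma fin3_cases : ∀ i j : Fin 3, j = i ∨ j = i + 1 ∨ j = i + 2 := by decide

lemma norm_sq_triple {u₀ u₁ u₂ : E3} (h00 : ‖u₀‖ = 1) (h11 : ‖u₁‖ = 1) (h22 : ‖u₂‖ = 1)
    (h01 : ⟪u₀, u₁⟫ = 0) (h02 : ⟪u₀, u₂⟫ = 0) (h12 : ⟪u₁, u₂⟫ = 0) (a b c : ℝ) :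
    ‖a • u₀ + b • u₁ + c • u₂‖ ^ 2 = a ^ 2 + b ^ 2 + c ^ 2 := by
  have e1 : ⟪a • u₀ + b • u₁, c • u₂⟫ = 0 := by
    rw [inner_add_left, real_inner_smul_left, real_inner_smul_left, real_inner_smul_right,
      real_inner_smul_right, h02, h12]
    ring
  have e2 : ⟪a • u₀, b • u₁⟫ = 0 := by
    rw [real_inner_smul_left, real_inner_smul_right, h01]; ring
  rw [norm_add_sq_real, e1, norm_add_sq_real, e2]
  rw [norm_smul, norm_smul, norm_smul, h00, h11, h22]
  simp only [Real.norm_eq_abs, mul_one]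
  rw [sq_abs, sq_abs, sq_abs]
  ring

lemma Amap_norm_sq (i : Fin 3) {ε : ℝ} (hε : ε ^ 2 = 1) (y : ℝ × ℝ) :
    ‖Amap i ε y‖ ^ 2 = 1 + y.1 ^ 2 + y.2 ^ 2 := by
  obtain ⟨d1, d2, d3⟩ := fin3_distinct i
  rw [Amap, norm_sq_triple (eV_norm i) (eV_norm (i+1)) (eV_norm (i+2))
    (eV_inner_ne d1) (eV_inner_ne d2) (eV_inner_ne d3), hε]

lemma Amap_lip (i : Fin 3) (ε : ℝ) : LipschitzWith 2 (Amap i ε) := by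
  apply LipschitzWith.of_dist_le_mul
  intro y y'
  have hdiff : Amap i ε y - Amap i ε y' = (y.1 - y'.1) • eV (i+1) + (y.2 - y'.2) • eV (i+2) := by
    simp only [Amap]
    module
  rw [dist_eq_norm, hdiff, Prod.dist_eq]
  calc ‖(y.1 - y'.1) • eV (i+1) + (y.2 - y'.2) • eV (i+2)‖
      ≤ ‖(y.1 - y'.1) • eV (i+1)‖ + ‖(y.2 - y'.2) • eV (i+2)‖ := norm_add_le _ _
    _ = |y.1 - y'.1| + |y.2 - y'.2| := by
        rw [norm_smul, norm_smul, eV_norm, eV_norm]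
        simp [Real.norm_eq_abs]
    _ ≤ 2 * max (dist y.1 y'.1) (dist y.2 y'.2) := by
        rw [Real.dist_eq, Real.dist_eq]
        have h1 := le_max_left |y.1 - y'.1| |y.2 - y'.2|
        have h2 := le_max_right |y.1 - y'.1| |y.2 - y'.2|
        push_cast
        linarith

lemma Amap_one_le {i : Fin 3} {ε : ℝ} (hε : ε ^ 2 = 1) (y : ℝ × ℝ) : 1 ≤ ‖Amap i ε y‖ := by
  have h := Amap_norm_sq i hε y
  nlinarith [norm_nonneg (Amap i ε y), sq_nonneg y.1, sq_nonneg y.2]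

lemma Amap_le {i : Fin 3} {ε : ℝ} (hε : ε ^ 2 = 1) {y : ℝ × ℝ} (hy : y ∈ Q2) :
    ‖Amap i ε y‖ ≤ 7 / 4 := by
  have h := Amap_norm_sq i hε y
  obtain ⟨hy1, hy2⟩ := hy
  rw [mem_Icc] at hy1 hy2
  have e1 : y.1 ^ 2 ≤ 1 := by nlinarith [hy1.1, hy1.2]
  have e2 : y.2 ^ 2 ≤ 1 := by nlinarith [hy2.1, hy2.2]
  nlinarith [norm_nonneg (Amap i ε y)]

lemma nmap_lipOn : LipschitzOnWith 2 nmap {v : E3 | 1 ≤ ‖v‖} := by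
  apply LipschitzOnWith.of_dist_le_mul
  intro v hv w hw
  simp only [mem_setOf_eq] at hv hw
  have hv0 : (0:ℝ) < ‖v‖ := lt_of_lt_of_le one_pos hv
  have hw0 : (0:ℝ) < ‖w‖ := lt_of_lt_of_le one_pos hw
  rw [dist_eq_norm, dist_eq_norm]
  have key : nmap v - nmap w = ‖v‖⁻¹ • (v - w) + (‖v‖⁻¹ - ‖w‖⁻¹) • w := by
    rw [nmap, nmap, smul_sub, sub_smul]
    abel
  rw [key]
  have habs : |‖w‖ - ‖v‖| ≤ ‖v - w‖ := by
    have hh := abs_norm_sub_norm_le w v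
    rwa [norm_sub_rev] at hh
  have h1 : ‖‖v‖⁻¹ • (v - w)‖ ≤ ‖v - w‖ := by
    rw [norm_smul, Real.norm_eq_abs, abs_of_pos (inv_pos.mpr hv0)]
    calc ‖v‖⁻¹ * ‖v - w‖ ≤ 1 * ‖v - w‖ :=
      mul_le_mul_of_nonneg_right (inv_le_one_of_one_le₀ hv) (norm_nonneg _)
    _ = ‖v - w‖ := one_mul _
  have h2 : ‖(‖v‖⁻¹ - ‖w‖⁻¹) • w‖ ≤ ‖v - w‖ := by
    rw [norm_smul, Real.norm_eq_abs]
    have e : ‖v‖⁻¹ - ‖w‖⁻¹ = (‖w‖ - ‖v‖) / (‖v‖ * ‖w‖) := by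
      field_simp
    rw [e, abs_div, abs_mul, abs_of_pos hv0, abs_of_pos hw0]
    rw [div_mul_eq_mul_div, div_le_iff₀ (by positivity)]
    calc |‖w‖ - ‖v‖| * ‖w‖ ≤ ‖v - w‖ * ‖w‖ := mul_le_mul_of_nonneg_right habs (le_of_lt hw0)
      _ ≤ ‖v - w‖ * (‖v‖ * ‖w‖) := by
          refine mul_le_mul_of_nonneg_left ?_ (norm_nonneg _)
          exact le_mul_of_one_le_left (le_of_lt hw0) hv
  calc ‖‖v‖⁻¹ • (v - w) + (‖v‖⁻¹ - ‖w‖⁻¹) • w‖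
      ≤ ‖‖v‖⁻¹ • (v - w)‖ + ‖(‖v‖⁻¹ - ‖w‖⁻¹) • w‖ := norm_add_le _ _
    _ ≤ ‖v - w‖ + ‖v - w‖ := add_le_add h1 h2
    _ = 2 * ‖v - w‖ := by ring
    _ ≤ (2:ℝ≥0) * ‖v - w‖ := by norm_num

/-- covering of the unit sphere by the six Lipschitz patches. -/
lemma sphere_cover {ω : E3} (hω : ‖ω‖ = 1) :
    ∃ (i : Fin 3) (ε : ℝ), ε ^ 2 = 1 ∧ ∃ y ∈ Q2,
      ω = nmap (Amap i ε y) ∧ Amap i ε y = |ω i|⁻¹ • ω := by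
  -- find the max coordinate
  have hex : ∃ i : Fin 3, ∀ j : Fin 3, |ω j| ≤ |ω i| := by
    obtain ⟨i, _, hi⟩ := Finset.exists_max_image Finset.univ (fun j => |ω j|)
      ⟨0, Finset.mem_univ 0⟩
    exact ⟨i, fun j => hi j (Finset.mem_univ j)⟩
  obtain ⟨i, hi⟩ := hex
  have hM : 0 < |ω i| := by
    by_contra hM
    push_neg at hM
    have : ω = 0 := by
      ext j
      have := le_trans (hi j) hM
      have := abs_nonneg (ω j)
      have : |ω j| = 0 := le_antisymm (by linarith) (abs_nonneg _)
      simpa using abs_eq_zero.mp this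
    rw [this] at hω
    simp at hω
  set M := |ω i| with hMdef
  have hMne : M ≠ 0 := ne_of_gt hM
  have hωi : ω i ≠ 0 := by
    intro hzero
    rw [hMdef, hzero] at hM
    simp at hM
  obtain ⟨d1, d2, d3⟩ := fin3_distinct i
  set εv : ℝ := ω i / M with hεv
  set yv : ℝ × ℝ := (ω (i+1) / M, ω (i+2) / M) with hyv
  have hε2 : εv ^ 2 = 1 := by
    rw [hεv, div_pow, hMdef, sq_abs, div_self (pow_ne_zero _ hωi)]
  have habs1 : |ω (i+1) / M| ≤ 1 := by
    rw [abs_div, hMdef, abs_abs]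
    exact (div_le_one hM).mpr (hi _)
  have habs2 : |ω (i+2) / M| ≤ 1 := by
    rw [abs_div, hMdef, abs_abs]
    exact (div_le_one hM).mpr (hi _)
  have hyQ : yv ∈ Q2 := by
    constructor
    · rw [mem_Icc]; exact abs_le.mp habs1
    · rw [mem_Icc]; exact abs_le.mp habs2
  have hAeq : Amap i εv yv = M⁻¹ • ω := by
    ext j
    have hj : j = i ∨ j = i + 1 ∨ j = i + 2 := fin3_cases i j
    rcases hj with rfl | rfl | rfl <;>
      simp [Amap, eV, EuclideanSpace.single_apply, PiLp.add_apply, PiLp.smul_apply,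
        smul_eq_mul, d1, d2, d3, Ne.symm d1, Ne.symm d2, Ne.symm d3, hεv, hyv,
        div_eq_inv_mul]
  have hωeq : ω = nmap (Amap i εv yv) := by
    rw [hAeq, nmap, norm_smul, Real.norm_eq_abs, abs_inv, hMdef, abs_abs, ← hMdef, hω, mul_one,
      smul_smul, inv_inv, mul_inv_cancel₀ hMne, one_smul]
  exact ⟨i, εv, hε2, yv, hyQ, hωeq, hAeq⟩


lemma inner_Amap (x : E3) (i : Fin 3) (ε : ℝ) (y : ℝ × ℝ) :
    ⟪x, Amap i ε y⟫ = ε * x i + y.1 * x (i+1) + y.2 * x (i+2) := by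
  have hx : ∀ j, ⟪x, eV j⟫ = x j := by
    intro j; simp [eV, EuclideanSpace.inner_single_right]
  simp only [Amap, inner_add_right, real_inner_smul_right, hx]

lemma coord_sq_sum (x : E3) (i : Fin 3) :
    x i ^ 2 + x (i+1) ^ 2 + x (i+2) ^ 2 = ‖x‖ ^ 2 := by
  have hn : ‖x‖ ^ 2 = x 0 ^ 2 + x 1 ^ 2 + x 2 ^ 2 := by
    rw [EuclideanSpace.norm_eq, Real.sq_sqrt (by positivity), Fin.sum_univ_three]
    simp [Real.norm_eq_abs, sq_abs]
  fin_cases i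
  · show x 0 ^ 2 + x 1 ^ 2 + x 2 ^ 2 = _
    rw [hn]
  · show x 1 ^ 2 + x 2 ^ 2 + x 0 ^ 2 = _
    rw [hn]; ring
  · show x 2 ^ 2 + x 0 ^ 2 + x 1 ^ 2 = _
    rw [hn]; ring

lemma four_rpow_two : ((4 : ℝ≥0) : ℝ≥0∞) ^ (2:ℝ) = 16 := by
  rw [show (2:ℝ) = ((2:ℕ):ℝ) by norm_num, ENNReal.rpow_natCast]
  norm_num

lemma patch_measure_le {i : Fin 3} {ε : ℝ} (hε : ε ^ 2 = 1) {T : Set (ℝ × ℝ)} (hT : T ⊆ Q2) :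
    μH[2] ((fun y => nmap (Amap i ε y)) '' T) ≤ 16 * volume T := by
  have hmaps : MapsTo (Amap i ε) T {v : E3 | 1 ≤ ‖v‖} := fun y _ => Amap_one_le hε y
  have hcomp : LipschitzOnWith 4 (nmap ∘ Amap i ε) T := by
    have := nmap_lipOn.comp ((Amap_lip i ε).lipschitzOnWith (s := T)) hmaps
    convert this using 2
    norm_num
  calc μH[2] ((fun y => nmap (Amap i ε y)) '' T)
      ≤ ((4:ℝ≥0) : ℝ≥0∞) ^ (2:ℝ) * μH[2] T := hcomp.hausdorffMeasure_image_le (by norm_num)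
    _ = 16 * volume T := by rw [four_rpow_two, MeasureTheory.hausdorffMeasure_prod_real]

lemma vol_Q2 : volume Q2 = 4 := by
  rw [Q2, Measure.volume_eq_prod, Measure.prod_prod, Real.volume_Icc]
  rw [show (1:ℝ) - -1 = 2 by norm_num]
  rw [show ENNReal.ofReal (2:ℝ) = 2 by
    rw [show ((2:ℝ)) = ((2:ℕ):ℝ) by norm_num, ENNReal.ofReal_natCast]; norm_num]
  norm_num

lemma eps_cases {ε : ℝ} (hε : ε ^ 2 = 1) : ε = 1 ∨ ε = -1 := by
  have : (ε - 1) * (ε + 1) = 0 := by nlinarith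
  rcases mul_eq_zero.mp this with h | h
  · left; linarith
  · right; linarith

def epsOf (b : Bool) : ℝ := if b then 1 else -1

lemma epsOf_sq (b : Bool) : epsOf b ^ 2 = 1 := by cases b <;> simp [epsOf]

lemma sphere_measure_le : μH[2] {ω : E3 | ‖ω‖ = 1} ≤ 384 := by
  have hsub : {ω : E3 | ‖ω‖ = 1} ⊆
      ⋃ p : Fin 3 × Bool, (fun y => nmap (Amap p.1 (epsOf p.2) y)) '' Q2 := by
    intro ω hω
    obtain ⟨i, ε, hε2, y, hyQ, hωeq, _⟩ := sphere_cover hω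
    rcases eps_cases hε2 with h1 | h1 <;> subst h1
    · exact mem_iUnion.mpr ⟨(i, true), ⟨y, hyQ, by
        simp only [epsOf, if_true]
        exact hωeq.symm⟩⟩
    · exact mem_iUnion.mpr ⟨(i, false), ⟨y, hyQ, by
        simp only [epsOf, Bool.false_eq_true, if_false]
        exact hωeq.symm⟩⟩
  calc μH[2] {ω : E3 | ‖ω‖ = 1}
      ≤ μH[2] (⋃ p : Fin 3 × Bool, (fun y => nmap (Amap p.1 (epsOf p.2) y)) '' Q2) :=
        measure_mono hsub
    _ ≤ ∑' p : Fin 3 × Bool, μH[2] ((fun y => nmap (Amap p.1 (epsOf p.2) y)) '' Q2) :=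
        measure_iUnion_le _
    _ ≤ ∑' _ : Fin 3 × Bool, (64 : ℝ≥0∞) := by
        refine ENNReal.tsum_le_tsum fun p => ?_
        calc μH[2] ((fun y => nmap (Amap p.1 (epsOf p.2) y)) '' Q2)
            ≤ 16 * volume Q2 := patch_measure_le (epsOf_sq p.2) (subset_refl _)
          _ = 64 := by rw [vol_Q2]; norm_num
    _ = 384 := by
        rw [tsum_fintype]
        simp [Finset.sum_const]
        norm_num



/-- 1-D interval slice: the set where `β t ∈ Icc u v` is small. -/
lemma slice_vol {β u v m : ℝ} (hm : 0 < m) (hβ : m ≤ |β|) (huv : u ≤ v) :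
    volume {t : ℝ | β * t ∈ Icc u v} ≤ ENNReal.ofReal ((v - u) / m) := by
  have hβ0 : β ≠ 0 := fun h => by rw [h, abs_zero] at hβ; linarith
  rcases lt_or_gt_of_ne hβ0 with hneg | hpos
  · have hβ' : m ≤ -β := by rwa [abs_of_neg hneg] at hβ
    have hset : {t : ℝ | β * t ∈ Icc u v} = Icc (v / β) (u / β) := by
      ext t
      simp only [mem_setOf_eq, mem_Icc]
      constructor
      · rintro ⟨h1, h2⟩
        constructor
        · rw [div_le_iff_of_neg hneg]; linarith [mul_comm β t]
        · rw [le_div_iff_of_neg hneg]; linarith [mul_comm β t]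
      · rintro ⟨h1, h2⟩
        rw [div_le_iff_of_neg hneg] at h1
        rw [le_div_iff_of_neg hneg] at h2
        constructor <;> linarith [mul_comm t β]
    rw [hset, Real.volume_Icc]
    apply ENNReal.ofReal_le_ofReal
    have key : u / β - v / β = (v - u) / (-β) := by
      field_simp
      ring
    rw [key, div_le_div_iff₀ (by linarith) hm]
    nlinarith
  · have hβ' : m ≤ β := by rwa [abs_of_pos hpos] at hβ
    have hset : {t : ℝ | β * t ∈ Icc u v} = Icc (u / β) (v / β) := by
      ext t
      simp only [mem_setOf_eq, mem_Icc]
      rw [div_le_iff₀ hpos, le_div_iff₀ hpos]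
      constructor <;> rintro ⟨h1, h2⟩ <;> constructor <;> linarith [mul_comm t β]
    rw [hset, Real.volume_Icc]
    apply ENNReal.ofReal_le_ofReal
    have key : v / β - u / β = (v - u) / β := by
      field_simp
    rw [key, div_le_div_iff₀ hpos hm]
    nlinarith

lemma strip_measurable (α β c η : ℝ) :
    MeasurableSet (Q2 ∩ (fun y : ℝ × ℝ => α * y.1 + β * y.2 + c) ⁻¹' Icc (-η) η) := by
  have hfm : Measurable (fun y : ℝ × ℝ => α * y.1 + β * y.2 + c) :=
    ((measurable_fst.const_mul α).add (measurable_snd.const_mul β)).add measurable_const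
  exact (measurableSet_Icc.prod measurableSet_Icc).inter (hfm measurableSet_Icc)

/-- area of a strip crossing the square. -/
lemma strip_vol {α β c η m : ℝ} (hη : 0 ≤ η) (hm : 0 < m) (hβ : m ≤ |β|) :
    volume (Q2 ∩ (fun y : ℝ × ℝ => α * y.1 + β * y.2 + c) ⁻¹' Icc (-η) η)
      ≤ ENNReal.ofReal (4 * η / m) := by
  set S := Q2 ∩ (fun y : ℝ × ℝ => α * y.1 + β * y.2 + c) ⁻¹' Icc (-η) η with hS
  have hSm : MeasurableSet S := strip_measurable α β c η
  rw [Measure.volume_eq_prod, Measure.prod_apply hSm]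
  have slice_bound : ∀ s : ℝ, volume (Prod.mk s ⁻¹' S)
      ≤ (Icc (-1:ℝ) 1).indicator (fun _ => ENNReal.ofReal (2 * η / m)) s := by
    intro s
    rw [indicator_apply]
    split_ifs with hs
    · have hsub : Prod.mk s ⁻¹' S ⊆ {t : ℝ | β * t ∈ Icc (-η - (α * s + c)) (η - (α * s + c))} := by
        rintro t ⟨_, ht⟩
        simp only [mem_preimage, mem_Icc] at ht
        simp only [mem_setOf_eq, mem_Icc]
        constructor <;> linarith [ht.1, ht.2]
      calc volume (Prod.mk s ⁻¹' S)
          ≤ volume {t : ℝ | β * t ∈ Icc (-η - (α * s + c)) (η - (α * s + c))} :=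
            measure_mono hsub
        _ ≤ ENNReal.ofReal ((η - (α * s + c) - (-η - (α * s + c))) / m) :=
            slice_vol hm hβ (by linarith)
        _ = ENNReal.ofReal (2 * η / m) := by
            congr 1
            ring
    · have hempty : Prod.mk s ⁻¹' S = ∅ := by
        rw [eq_empty_iff_forall_notMem]
        rintro t ⟨⟨hs1, _⟩, _⟩
        exact hs hs1
      rw [hempty]
      simp
  calc ∫⁻ s, volume (Prod.mk s ⁻¹' S)
      ≤ ∫⁻ s, (Icc (-1:ℝ) 1).indicator (fun _ => ENNReal.ofReal (2 * η / m)) s :=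
        lintegral_mono slice_bound
    _ = ENNReal.ofReal (2 * η / m) * volume (Icc (-1:ℝ) 1) := by
        rw [lintegral_indicator measurableSet_Icc, setLIntegral_const]
    _ = ENNReal.ofReal (4 * η / m) := by
        rw [Real.volume_Icc, show (1:ℝ) - -1 = 2 by norm_num,
          ← ENNReal.ofReal_mul (by positivity)]
        congr 1
        ring

set_option maxHeartbeats 1000000 in
/-- the spherical band has small measure. -/
lemma band_bound (x : E3) {R : ℝ} (hR : 0 ≤ R) (hx : 12 * R < ‖x‖) :
    μH[2] {ω : E3 | ‖ω‖ = 1 ∧ |⟪x, ω⟫| ≤ R} ≤ ENNReal.ofReal (2016 * R / ‖x‖) := by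
  have hX : 0 < ‖x‖ := lt_of_le_of_lt (by positivity) hx
  set X := ‖x‖ with hXdef
  set η : ℝ := 7 / 4 * R with hη
  have hη0 : 0 ≤ η := by positivity
  set m : ℝ := X / 3 with hmdef
  have hm : 0 < m := by positivity
  set T : Fin 3 × Bool → Set (ℝ × ℝ) := fun p => Q2 ∩
    (fun y : ℝ × ℝ => x (p.1+1) * y.1 + x (p.1+2) * y.2 + epsOf p.2 * x p.1) ⁻¹' Icc (-η) η
    with hT
  have hcov : {ω : E3 | ‖ω‖ = 1 ∧ |⟪x, ω⟫| ≤ R} ⊆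
      ⋃ p : Fin 3 × Bool, (fun y => nmap (Amap p.1 (epsOf p.2) y)) '' (T p) := by
    rintro ω ⟨hω, hband⟩
    obtain ⟨i, ε, hε2, y, hyQ, hωeq, hAeq⟩ := sphere_cover hω
    have hnormA : ‖Amap i ε y‖ = |ω i|⁻¹ := by
      rw [hAeq, norm_smul, Real.norm_eq_abs, abs_inv, abs_abs, hω, mul_one]
    have hinv : |ω i|⁻¹ ≤ 7 / 4 := by
      rw [← hnormA]
      exact Amap_le hε2 hyQ
    have hinner : ⟪x, Amap i ε y⟫ = |ω i|⁻¹ * ⟪x, ω⟫ := by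
      rw [hAeq, real_inner_smul_right]
    have hbound : |⟪x, Amap i ε y⟫| ≤ η := by
      rw [hinner, abs_mul, abs_inv, abs_abs, hη]
      exact mul_le_mul hinv hband (abs_nonneg _) (by norm_num)
    have hval : ⟪x, Amap i ε y⟫ = ε * x i + y.1 * x (i+1) + y.2 * x (i+2) := inner_Amap x i ε y
    have hmemT : ∀ b : Bool, epsOf b = ε → y ∈ T (i, b) := by
      intro b hb
      refine ⟨hyQ, ?_⟩
      simp only [mem_preimage, mem_Icc]
      have heq : x (i+1) * y.1 + x (i+2) * y.2 + epsOf b * x i = ⟪x, Amap i ε y⟫ := by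
        rw [hval, hb]
        ring
      rw [heq]
      exact abs_le.mp hbound
    rcases eps_cases hε2 with h1 | h1
    · refine mem_iUnion.mpr ⟨(i, true), ⟨y, hmemT true (by simp [epsOf, h1]), ?_⟩⟩
      simp only [epsOf, if_true]
      rw [← h1]
      exact hωeq.symm
    · refine mem_iUnion.mpr ⟨(i, false), ⟨y, hmemT false (by simp [epsOf, h1]), ?_⟩⟩
      simp only [epsOf, Bool.false_eq_true, if_false]
      rw [← h1]
      exact hωeq.symm
  have hvolT : ∀ p : Fin 3 × Bool, volume (T p) ≤ ENNReal.ofReal (4 * η / m) := by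
    intro p
    set i := p.1 with hi
    set α : ℝ := x (i+1) with hα
    set β : ℝ := x (i+2) with hβ
    set c : ℝ := epsOf p.2 * x i with hc
    have hsum : α ^ 2 + β ^ 2 + c ^ 2 = X ^ 2 := by
      have h1 := coord_sq_sum x i
      have h2 : c ^ 2 = x i ^ 2 := by
        rw [hc, mul_pow, epsOf_sq p.2, one_mul]
      rw [hXdef, h2, ← h1]
      ring
    by_cases hcase2 : m ≤ |β|
    · exact strip_vol hη0 hm hcase2
    · by_cases hcase1 : m ≤ |α|
      · -- swap coordinates
        have hswapEq : Prod.swap ⁻¹' (T p)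
            = Q2 ∩ (fun y : ℝ × ℝ => β * y.1 + α * y.2 + c) ⁻¹' Icc (-η) η := by
          ext y
          simp only [hT, mem_preimage, Prod.fst_swap, Prod.snd_swap, mem_inter_iff, mem_Icc,
            Q2, mem_prod]
          constructor
          · rintro ⟨⟨hq1, hq2⟩, hI1, hI2⟩
            exact ⟨⟨hq2, hq1⟩, by linarith, by linarith⟩
          · rintro ⟨⟨hq1, hq2⟩, hI1, hI2⟩
            exact ⟨⟨hq2, hq1⟩, by linarith, by linarith⟩
        have hTm : MeasurableSet (T p) := strip_measurable α β c η
        have hvol : volume (Prod.swap ⁻¹' (T p)) = volume (T p) := by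
          rw [Measure.volume_eq_prod]
          exact Measure.measurePreserving_swap.measure_preimage hTm.nullMeasurableSet
        rw [← hvol, hswapEq]
        exact strip_vol hη0 hm hcase1
      · -- empty strip
        push_neg at hcase1 hcase2
        have hempty : T p = ∅ := by
          rw [eq_empty_iff_forall_notMem]
          rintro y ⟨⟨hy1, hy2⟩, hyI⟩
          rw [mem_Icc] at hy1 hy2
          simp only [mem_preimage, mem_Icc] at hyI
          rw [← hi, ← hα, ← hβ, ← hc] at hyI
          have habs1 : |α * y.1| ≤ |α| := by
            rw [abs_mul]
            calc |α| * |y.1| ≤ |α| * 1 :=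
                  mul_le_mul_of_nonneg_left (abs_le.mpr ⟨hy1.1, hy1.2⟩) (abs_nonneg _)
              _ = |α| := mul_one _
          have habs2 : |β * y.2| ≤ |β| := by
            rw [abs_mul]
            calc |β| * |y.2| ≤ |β| * 1 :=
                  mul_le_mul_of_nonneg_left (abs_le.mpr ⟨hy2.1, hy2.2⟩) (abs_nonneg _)
              _ = |β| := mul_one _
          have hcabs : |c| ≤ η + |α| + |β| := by
            have htri : |c| ≤ |α * y.1 + β * y.2 + c| + |α * y.1| + |β * y.2| := by
              have t1 := abs_sub ((α * y.1 + β * y.2 + c) - α * y.1) (β * y.2)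
              have t2 := abs_sub (α * y.1 + β * y.2 + c) (α * y.1)
              have t3 : (α * y.1 + β * y.2 + c) - α * y.1 - β * y.2 = c := by ring
              rw [t3] at t1
              linarith
            have hfy : |α * y.1 + β * y.2 + c| ≤ η := abs_le.mpr ⟨hyI.1, hyI.2⟩
            linarith
          have hX2 : 0 < X ^ 2 := by positivity
          have e1 : α ^ 2 < m ^ 2 := by nlinarith [abs_nonneg α, sq_abs α]
          have e2 : β ^ 2 < m ^ 2 := by nlinarith [abs_nonneg β, sq_abs β]
          have hm2 : m ^ 2 = X ^ 2 / 9 := by rw [hmdef]; ring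
          rw [hm2] at e1 e2
          have hcl : (39/48 * X) ^ 2 < c ^ 2 := by nlinarith
          have hcgt : 39/48 * X < |c| := by
            nlinarith [abs_nonneg c, sq_abs c, hX]
          have hηX : η < 7/48 * X := by
            rw [hη]
            linarith
          have hsmall : η + |α| + |β| < 39/48 * X := by
            rw [hmdef] at hcase1 hcase2
            linarith
          linarith
        rw [hempty]
        simp only [measure_empty]
        positivity
  have hfinal : 4 * η / m = 21 * R / X := by
    rw [hη, hmdef]
    field_simp
    ring
  calc μH[2] {ω : E3 | ‖ω‖ = 1 ∧ |⟪x, ω⟫| ≤ R}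
      ≤ μH[2] (⋃ p : Fin 3 × Bool, (fun y => nmap (Amap p.1 (epsOf p.2) y)) '' (T p)) :=
        measure_mono hcov
    _ ≤ ∑' p : Fin 3 × Bool, μH[2] ((fun y => nmap (Amap p.1 (epsOf p.2) y)) '' (T p)) :=
        measure_iUnion_le _
    _ ≤ ∑' _ : Fin 3 × Bool, (16 * ENNReal.ofReal (21 * R / X)) := by
        refine ENNReal.tsum_le_tsum fun p => ?_
        calc μH[2] ((fun y => nmap (Amap p.1 (epsOf p.2) y)) '' (T p))
            ≤ 16 * volume (T p) := patch_measure_le (epsOf_sq p.2) inter_subset_left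
          _ ≤ 16 * ENNReal.ofReal (4 * η / m) := by gcongr; exact hvolT p
          _ = 16 * ENNReal.ofReal (21 * R / X) := by rw [hfinal]
    _ = 6 * (16 * ENNReal.ofReal (21 * R / X)) := by
        rw [tsum_fintype, Finset.sum_const]
        simp only [Finset.card_univ, Fintype.card_prod, Fintype.card_fin, Fintype.card_bool,
          smul_eq_mul]
        norm_num
    _ = ENNReal.ofReal (2016 * R / X) := by
        rw [show (6 : ℝ≥0∞) * (16 * ENNReal.ofReal (21 * R / X))
            = 96 * ENNReal.ofReal (21 * R / X) by ring]
        rw [show (96 : ℝ≥0∞) = ENNReal.ofReal (96:ℝ) by simp]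
        rw [← ENNReal.ofReal_mul (by norm_num)]
        congr 1
        ring


variable {ν : ℝ → ℝ}

lemma nut_antitone (hm : AntitoneOn ν (Ici 0)) : Antitone (fun r => ν (max r 0)) :=
  fun r r' hrr => hm (mem_Ici.mpr (le_max_right r 0)) (mem_Ici.mpr (le_max_right r' 0))
    (max_le_max hrr le_rfl)

lemma h_antitone (hm : AntitoneOn ν (Ici 0)) :
    Antitone (fun r => ENNReal.ofReal (ν (max r 0))) :=
  fun r r' hrr => ENNReal.ofReal_le_ofReal (nut_antitone hm hrr)

lemma psi0_fin (hm : AntitoneOn ν (Ici 0))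
    (hi : MeasureTheory.IntegrableOn (fun r => r * ν r) (Ioi 0)) :
    psi (fun r => ENNReal.ofReal (ν (max r 0))) 0 ≠ ∞ := by
  have hb : psi (fun r => ENNReal.ofReal (ν (max r 0))) 0
      ≤ ∫⁻ r in Ioi 0, ‖r * ν r‖₊ := by
    refine lintegral_mono_ae ?_
    refine (ae_restrict_iff' measurableSet_Ioi).mpr (ae_of_all _ fun r hr => ?_)
    have hr0 : (0:ℝ) < r := hr
    show ENNReal.ofReal r * ENNReal.ofReal (ν (max r 0)) ≤ _
    rw [max_eq_left (le_of_lt hr0), ← ENNReal.ofReal_mul (le_of_lt hr0)]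
    rw [show ((‖r * ν r‖₊ : ℝ≥0) : ℝ≥0∞) = ENNReal.ofReal |r * ν r| from
      Real.enorm_eq_ofReal_abs _]
    exact ENNReal.ofReal_le_ofReal (le_abs_self _)
  exact ne_top_of_le_ne_top hi.2.ne hb

lemma psi_tendsto (hm : AntitoneOn ν (Ici 0))
    (hi : MeasureTheory.IntegrableOn (fun r => r * ν r) (Ioi 0)) :
    Tendsto (fun n : ℕ => psi (fun r => ENNReal.ofReal (ν (max r 0))) n) atTop (nhds 0) := by
  set h : ℝ → ℝ≥0∞ := fun r => ENNReal.ofReal (ν (max r 0)) with hh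
  have hhm : Measurable h := (h_antitone hm).measurable
  set f' : ℝ → ℝ≥0∞ := (Ioi (0:ℝ)).indicator (fun r => ENNReal.ofReal r * h r) with hf'
  have hf'm : Measurable f' :=
    (ENNReal.measurable_ofReal.mul hhm).indicator measurableSet_Ioi
  set μν : Measure ℝ := volume.withDensity f' with hμν
  have hψeq : ∀ c : ℝ, 0 ≤ c → psi h c = μν (Ioi c) := by
    intro c hc
    rw [hμν, withDensity_apply _ measurableSet_Ioi]
    refine (setLIntegral_congr_fun measurableSet_Ioi (fun r hr => ?_)).symm
    rw [hf', indicator_of_mem (show r ∈ Ioi (0:ℝ) from lt_of_le_of_lt hc hr)]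
  have hfin : μν (Ioi (0:ℝ)) ≠ ∞ := by
    rw [← hψeq 0 le_rfl]
    exact psi0_fin hm hi
  have hlim : Tendsto (fun n : ℕ => μν (Ioi (n:ℝ))) atTop (nhds (μν (⋂ n : ℕ, Ioi (n:ℝ)))) := by
    refine tendsto_measure_iInter_atTop (fun n => measurableSet_Ioi.nullMeasurableSet) ?_ ⟨0, ?_⟩
    · intro m n hmn
      exact Ioi_subset_Ioi (by exact_mod_cast hmn)
    · simpa using hfin
  have hempty : (⋂ n : ℕ, Ioi ((n:ℕ):ℝ)) = ∅ := by
    ext r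
    simp only [mem_iInter, mem_Ioi, mem_empty_iff_false, iff_false, not_forall, not_lt]
    obtain ⟨n, hn⟩ := exists_nat_gt r
    exact ⟨n, le_of_lt hn⟩
  rw [hempty] at hlim
  simp only [measure_empty] at hlim
  have : (fun n : ℕ => psi h n) = fun n : ℕ => μν (Ioi (n:ℝ)) := by
    funext n
    exact hψeq n (by positivity)
  rw [this]
  exact hlim

lemma ofReal_norm_integral_le {X : Type*} [MeasurableSpace X] (μ : Measure X) (f : X → ℝ) :
    ENNReal.ofReal ‖∫ x, f x ∂μ‖ ≤ ∫⁻ x, ENNReal.ofReal ‖f x‖ ∂μ := by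
  by_cases hfin : (∫⁻ x, ENNReal.ofReal ‖f x‖ ∂μ) = ∞
  · rw [hfin]; exact le_top
  · calc ENNReal.ofReal ‖∫ x, f x ∂μ‖
        ≤ ENNReal.ofReal ((∫⁻ x, ENNReal.ofReal ‖f x‖ ∂μ).toReal) :=
          ENNReal.ofReal_le_ofReal (norm_integral_le_lintegral_norm f)
      _ = ∫⁻ x, ENNReal.ofReal ‖f x‖ ∂μ := ENNReal.ofReal_toReal hfin


end RadonAux
end

open RadonAux Set

/-- Decay of the half-sphere Radon average (formulas (6.5)-(6.6) of the paper): if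
`|F(p)| ≤ ν(|p|)` with `ν` nonincreasing and `∫₀^∞ r ν(r) dr < ∞`, then
`g(x) = (1/(4π)²) ∫_{|ω|=1, ω₃>0} ∫_{⟨p,ω⟩=⟨x,ω⟩} F(p) dH²(p) dS(ω)` is bounded on `ℝ³`
and `g(x) → 0` as `|x| → ∞`. -/
theorem radon_half_average_bounded_decay
    (ν : ℝ → ℝ) (h0 : ∀ r, 0 ≤ r → 0 ≤ ν r) (hm : AntitoneOn ν (Set.Ici 0))
    (hi : MeasureTheory.IntegrableOn (fun r => r * ν r) (Set.Ioi 0))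
    (F : EuclideanSpace ℝ (Fin 3) → ℝ) (hFm : Measurable F) (hFb : ∀ p, |F p| ≤ ν ‖p‖)
    (g : EuclideanSpace ℝ (Fin 3) → ℝ)
    (hg : ∀ x, g x = (1 / (4 * Real.pi) ^ 2) *
      ∫ ω in {ω : EuclideanSpace ℝ (Fin 3) | ‖ω‖ = 1 ∧ 0 < ω 2},
        (∫ p in {p : EuclideanSpace ℝ (Fin 3) | ⟪p, ω⟫ = ⟪x, ω⟫}, F p ∂(μH[2])) ∂(μH[2])) :
    (∃ M : ℝ, ∀ x, |g x| ≤ M) ∧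
      Tendsto g (cocompact (EuclideanSpace ℝ (Fin 3))) (nhds 0) := by
  classical
  set h : ℝ → ℝ≥0∞ := fun r => ENNReal.ofReal (ν (max r 0)) with hhdef
  have hh : Antitone h := h_antitone hm
  set ψ : ℝ → ℝ≥0∞ := psi h with hψdef
  have hψ0 : ψ 0 ≠ ∞ := psi0_fin hm hi
  have hψanti : Antitone ψ := psi_anti h
  set HS : Set (EuclideanSpace ℝ (Fin 3)) := {ω | ‖ω‖ = 1 ∧ 0 < ω 2} with hHS
  set cb : ℝ := 1 / (4 * Real.pi) ^ 2 with hcb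
  have hπ : (0:ℝ) < Real.pi := Real.pi_pos
  have hcbpos : 0 < cb := by positivity
  -- the key pointwise plane bound
  have hplane : ∀ (x ω : EuclideanSpace ℝ (Fin 3)), ‖ω‖ = 1 →
      ENNReal.ofReal ‖∫ p in {p : EuclideanSpace ℝ (Fin 3) | ⟪p, ω⟫ = ⟪x, ω⟫}, F p ∂μH[2]‖
        ≤ 112 * ψ (|⟪x, ω⟫| / 2) := by
    intro x ω hω
    calc ENNReal.ofReal ‖∫ p in {p : EuclideanSpace ℝ (Fin 3) | ⟪p, ω⟫ = ⟪x, ω⟫}, F p ∂μH[2]‖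
        ≤ ∫⁻ p in {p : EuclideanSpace ℝ (Fin 3) | ⟪p, ω⟫ = ⟪x, ω⟫},
            ENNReal.ofReal ‖F p‖ ∂μH[2] := ofReal_norm_integral_le _ _
      _ ≤ ∫⁻ p in {p : EuclideanSpace ℝ (Fin 3) | ⟪p, ω⟫ = ⟪x, ω⟫}, h ‖p‖ ∂μH[2] := by
          refine lintegral_mono fun p => ENNReal.ofReal_le_ofReal ?_
          rw [Real.norm_eq_abs]
          calc |F p| ≤ ν ‖p‖ := hFb p
            _ = ν (max ‖p‖ 0) := by rw [max_eq_left (norm_nonneg p)]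
      _ ≤ 4 * ∫⁻ y : ℝ × ℝ, h (max |⟪x, ω⟫| (max |y.1| |y.2|)) :=
          plane_lintegral_bound h hh x ω hω
      _ ≤ 4 * (28 * psi h (|⟪x, ω⟫| / 2)) := by
          gcongr
          exact planar_bound hh _ (abs_nonneg _)
      _ = 112 * ψ (|⟪x, ω⟫| / 2) := by rw [← hψdef]; ring
  have hψmeas : Measurable ψ := hψanti.measurable
  have hinnermeas : ∀ x : EuclideanSpace ℝ (Fin 3),
      Measurable (fun ω : EuclideanSpace ℝ (Fin 3) => 112 * ψ (|⟪x, ω⟫| / 2)) := by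
    intro x
    have hc : Continuous fun ω : EuclideanSpace ℝ (Fin 3) => ⟪x, ω⟫ :=
      continuous_const.inner continuous_id
    exact (hψmeas.comp ((hc.abs.div_const 2).measurable)).const_mul 112
  have houter : ∀ x : EuclideanSpace ℝ (Fin 3),
      ENNReal.ofReal ‖∫ ω in HS,
          (∫ p in {p : EuclideanSpace ℝ (Fin 3) | ⟪p, ω⟫ = ⟪x, ω⟫}, F p ∂μH[2]) ∂μH[2]‖
        ≤ ∫⁻ ω in HS, 112 * ψ (|⟪x, ω⟫| / 2) ∂μH[2] := by
    intro x
    refine (ofReal_norm_integral_le _ _).trans ?_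
    exact setLIntegral_mono (hinnermeas x) fun ω hω => hplane x ω hω.1
  have habsg : ∀ x, |g x| = cb * ‖∫ ω in HS,
      (∫ p in {p : EuclideanSpace ℝ (Fin 3) | ⟪p, ω⟫ = ⟪x, ω⟫}, F p ∂μH[2]) ∂μH[2]‖ := by
    intro x
    rw [hg x, abs_mul, Real.norm_eq_abs, abs_of_pos hcbpos]
  have hHSm : μH[2] HS ≤ 384 :=
    le_trans (measure_mono fun ω hω => hω.1) sphere_measure_le
  -- global bound on the outer lintegral
  have hJbound : ∀ x : EuclideanSpace ℝ (Fin 3),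
      ∫⁻ ω in HS, 112 * ψ (|⟪x, ω⟫| / 2) ∂μH[2] ≤ 112 * ψ 0 * 384 := by
    intro x
    calc ∫⁻ ω in HS, 112 * ψ (|⟪x, ω⟫| / 2) ∂μH[2]
        ≤ ∫⁻ _ in HS, 112 * ψ 0 ∂μH[2] := by
          refine setLIntegral_mono measurable_const fun ω _ => ?_
          gcongr
          exact hψanti (by positivity)
      _ = 112 * ψ 0 * μH[2] HS := setLIntegral_const _ _
      _ ≤ 112 * ψ 0 * 384 := by
          gcongr
  set B : ℝ≥0∞ := 112 * ψ 0 * 384 with hB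
  have hBne : B ≠ ∞ := by
    rw [hB]
    exact ENNReal.mul_ne_top (ENNReal.mul_ne_top (by norm_num) hψ0) (by norm_num)
  constructor
  · -- boundedness
    refine ⟨cb * B.toReal, fun x => ?_⟩
    rw [habsg x]
    have hle : ENNReal.ofReal ‖∫ ω in HS,
        (∫ p in {p : EuclideanSpace ℝ (Fin 3) | ⟪p, ω⟫ = ⟪x, ω⟫}, F p ∂μH[2]) ∂μH[2]‖ ≤ B :=
      le_trans (houter x) (hJbound x)
    have := (ENNReal.ofReal_le_iff_le_toReal hBne).mp hle
    exact mul_le_mul_of_nonneg_left this hcbpos.le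
  · -- decay
    rw [Metric.tendsto_nhds]
    intro ε hε
    set D₀ : ℝ := ε / 2 * (4 * Real.pi) ^ 2 with hD₀
    have hD₀pos : 0 < D₀ := by positivity
    have hc0 : (0:ℝ≥0∞) < ENNReal.ofReal (D₀ / 2) / 43008 := by
      refine ENNReal.div_pos ?_ (by norm_num)
      simp only [ne_eq, ENNReal.ofReal_eq_zero, not_le]
      positivity
    have hev := (psi_tendsto hm hi).eventually (gt_mem_nhds hc0)
    obtain ⟨n, hn⟩ := hev.exists
    set R : ℝ := 2 * (n : ℝ) with hRdef
    have hR0 : 0 ≤ R := by positivity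
    have hψR : ψ (R / 2) = ψ (n : ℝ) := by
      rw [hRdef]
      norm_num
    set C₂ : ℝ := (112 * ψ 0).toReal with hC₂
    have hC₂0 : 0 ≤ C₂ := ENNReal.toReal_nonneg
    have hC₂eq : (112 : ℝ≥0∞) * ψ 0 = ENNReal.ofReal C₂ := by
      rw [hC₂, ENNReal.ofReal_toReal (ENNReal.mul_ne_top (by norm_num) hψ0)]
    set ρ : ℝ := max (12 * R + 1) ((C₂ * 2016 * R) / (D₀ / 2) + 1) with hρ
    have hmem : {x : EuclideanSpace ℝ (Fin 3) | ρ < ‖x‖} ∈ cocompact (EuclideanSpace ℝ (Fin 3)) := by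
      rw [mem_cocompact]
      refine ⟨Metric.closedBall 0 ρ, isCompact_closedBall 0 ρ, fun x hx => ?_⟩
      simp only [mem_compl_iff, Metric.mem_closedBall, dist_zero_right, not_le] at hx
      exact hx
    filter_upwards [hmem] with x hx
    have hxρ : ρ < ‖x‖ := hx
    have hx12 : 12 * R < ‖x‖ := lt_of_lt_of_le (by linarith [le_max_left (12 * R + 1) ((C₂ * 2016 * R) / (D₀ / 2) + 1)]) hxρ.le
    have hX : 0 < ‖x‖ := lt_of_le_of_lt (by positivity) hx12
    have hxρ₂ : (C₂ * 2016 * R) / (D₀ / 2) < ‖x‖ :=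
      lt_of_lt_of_le (by linarith [le_max_right (12 * R + 1) ((C₂ * 2016 * R) / (D₀ / 2) + 1)]) hxρ.le
    -- split the outer integral
    set S1 : Set (EuclideanSpace ℝ (Fin 3)) := {ω | ω ∈ HS ∧ |⟪x, ω⟫| ≤ R} with hS1
    set S2 : Set (EuclideanSpace ℝ (Fin 3)) := {ω | ω ∈ HS ∧ R < |⟪x, ω⟫|} with hS2
    have hHSsub : HS ⊆ S1 ∪ S2 := by
      intro ω hω
      by_cases hc : |⟪x, ω⟫| ≤ R
      · exact Or.inl ⟨hω, hc⟩
      · exact Or.inr ⟨hω, not_le.mp hc⟩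
    have hsplit : ∫⁻ ω in HS, 112 * ψ (|⟪x, ω⟫| / 2) ∂μH[2]
        ≤ (∫⁻ ω in S1, 112 * ψ (|⟪x, ω⟫| / 2) ∂μH[2])
          + ∫⁻ ω in S2, 112 * ψ (|⟪x, ω⟫| / 2) ∂μH[2] := by
      calc ∫⁻ ω in HS, 112 * ψ (|⟪x, ω⟫| / 2) ∂μH[2]
          ≤ ∫⁻ ω in S1 ∪ S2, 112 * ψ (|⟪x, ω⟫| / 2) ∂μH[2] := lintegral_mono_set hHSsub
        _ ≤ _ := lintegral_union_le _ _ _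
    -- piece 1 : band
    have hband : μH[2] S1 ≤ ENNReal.ofReal (2016 * R / ‖x‖) := by
      refine le_trans (measure_mono ?_) (band_bound x hR0 hx12)
      rintro ω ⟨⟨hω1, _⟩, hω2⟩
      exact ⟨hω1, hω2⟩
    have hpiece1 : ∫⁻ ω in S1, 112 * ψ (|⟪x, ω⟫| / 2) ∂μH[2] ≤ ENNReal.ofReal (D₀ / 2) := by
      calc ∫⁻ ω in S1, 112 * ψ (|⟪x, ω⟫| / 2) ∂μH[2]
          ≤ ∫⁻ _ in S1, 112 * ψ 0 ∂μH[2] := by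
            refine setLIntegral_mono measurable_const fun ω _ => ?_
            gcongr
            exact hψanti (by positivity)
        _ = 112 * ψ 0 * μH[2] S1 := setLIntegral_const _ _
        _ ≤ ENNReal.ofReal C₂ * ENNReal.ofReal (2016 * R / ‖x‖) := by
            rw [← hC₂eq]
            gcongr
        _ = ENNReal.ofReal (C₂ * (2016 * R / ‖x‖)) := by
            rw [← ENNReal.ofReal_mul hC₂0]
        _ ≤ ENNReal.ofReal (D₀ / 2) := by
            refine ENNReal.ofReal_le_ofReal ?_
            have h1 : C₂ * 2016 * R < ‖x‖ * (D₀ / 2) :=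
              (div_lt_iff₀ (by positivity)).mp hxρ₂
            have h2 : C₂ * (2016 * R / ‖x‖) = C₂ * 2016 * R / ‖x‖ := by ring
            rw [h2, div_le_iff₀ hX]
            nlinarith
    -- piece 2 : far set
    have hpiece2 : ∫⁻ ω in S2, 112 * ψ (|⟪x, ω⟫| / 2) ∂μH[2] ≤ ENNReal.ofReal (D₀ / 2) := by
      calc ∫⁻ ω in S2, 112 * ψ (|⟪x, ω⟫| / 2) ∂μH[2]
          ≤ ∫⁻ _ in S2, 112 * ψ ((n : ℝ)) ∂μH[2] := by
            refine setLIntegral_mono measurable_const fun ω hω => ?_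
            gcongr
            rw [← hψR]
            exact hψanti (by linarith [hω.2])
        _ = 112 * ψ (n : ℝ) * μH[2] S2 := setLIntegral_const _ _
        _ ≤ 112 * ψ (n : ℝ) * 384 := by
            gcongr
            refine le_trans (measure_mono ?_) sphere_measure_le
            rintro ω ⟨⟨hω1, _⟩, _⟩
            exact hω1
        _ = 43008 * ψ (n : ℝ) := by ring
        _ ≤ 43008 * (ENNReal.ofReal (D₀ / 2) / 43008) := by
            gcongr
        _ ≤ ENNReal.ofReal (D₀ / 2) := ENNReal.mul_div_le
    -- combine
    have hJ : ∫⁻ ω in HS, 112 * ψ (|⟪x, ω⟫| / 2) ∂μH[2] ≤ ENNReal.ofReal D₀ := by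
      refine hsplit.trans ?_
      calc (∫⁻ ω in S1, 112 * ψ (|⟪x, ω⟫| / 2) ∂μH[2])
            + ∫⁻ ω in S2, 112 * ψ (|⟪x, ω⟫| / 2) ∂μH[2]
          ≤ ENNReal.ofReal (D₀ / 2) + ENNReal.ofReal (D₀ / 2) := add_le_add hpiece1 hpiece2
        _ = ENNReal.ofReal D₀ := by
            rw [← ENNReal.ofReal_add (by positivity) (by positivity)]
            norm_num
    have hnorm : ‖∫ ω in HS,
        (∫ p in {p : EuclideanSpace ℝ (Fin 3) | ⟪p, ω⟫ = ⟪x, ω⟫}, F p ∂μH[2]) ∂μH[2]‖ ≤ D₀ := by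
      have := le_trans (houter x) hJ
      exact (ENNReal.ofReal_le_ofReal_iff hD₀pos.le).mp this
    rw [Real.dist_eq, sub_zero]
    have : |g x| ≤ ε / 2 := by
      rw [habsg x]
      calc cb * ‖∫ ω in HS,
          (∫ p in {p : EuclideanSpace ℝ (Fin 3) | ⟪p, ω⟫ = ⟪x, ω⟫}, F p ∂μH[2]) ∂μH[2]‖
          ≤ cb * D₀ := mul_le_mul_of_nonneg_left hnorm hcbpos.le
        _ = ε / 2 := by
            rw [hcb, hD₀]
            field_simp
    linarith
end
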